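/- arXiv:1508.05534 — 8 statements merged into one kernel-verified Lean document; each statement's English description precedes it below -/
import Mathlib

section
/- Let p be an odd prime, and let m, n ≥ 0 and r ≥ 1 be integers with p^r > m. Then N_{r'}(m,n) = N_r(m,n) for every integer r' ≥ r; that is, the counting function N_r(m,n) stabilizes once p^r > m. -/
/-- The set `S_r(m,n)` of solutions of the linear system, encoded as pairs of
finitely supported sequences `(a, b) : (ℕ → ℕ) × (ℕ → ℕ)` where index `i`
(for `0 ≤ i < r`) corresponds to `a_{i+1}`, `b_{i+1}`. -/
def SolSet (p r m n : ℕ) : Set ((ℕ → ℕ) × (ℕ → ℕ)) :=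
  {ab | (∀ i, r ≤ i → ab.1 i = 0) ∧ (∀ i, r ≤ i → ab.2 i = 0) ∧
        (∀ i, ab.2 i ≤ 1) ∧
        2 * (∑ i ∈ Finset.range r, ab.1 i) + ∑ i ∈ Finset.range r, ab.2 i = n ∧
        ab.2 0 + ∑ i ∈ Finset.range r, (ab.1 i + ab.2 (i + 1)) * p ^ (i + 1) = m}

/-- `N_r(m,n)`, the number of solutions of the linear system. -/
noncomputable def Ncard (p r m n : ℕ) : ℕ := Nat.card (SolSet p r m n)

/-- The stable value `N(m,n)` (for `p ≥ 2` one has `p ^ (m+1) > m`, so `r = m + 1`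
is in the stable range), with the convention that it vanishes for negative arguments. -/
noncomputable def Nstab (p : ℕ) (m n : ℤ) : ℕ :=
  if 0 ≤ m ∧ 0 ≤ n then Ncard p (m.toNat + 1) m.toNat n.toNat else 0

/-- for an odd prime `p` and `p ^ r > m`, the counting function
`N_r(m,n)` stabilizes: `N_{r'}(m,n) = N_r(m,n)` for all `r' ≥ r`. -/
theorem stmt2 (p : ℕ) (hp : p.Prime) (hodd : Odd p) (m n r : ℕ) (hr : 1 ≤ r)
    (hpr : m < p ^ r) (r' : ℕ) (hr' : r ≤ r') :
    Ncard p r' m n = Ncard p r m n := by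
  have hp1 : 1 ≤ p := hp.one_lt.le
  suffices h : SolSet p r' m n = SolSet p r m n by rw [Ncard, Ncard, h]
  ext ab
  constructor
  · rintro ⟨ha, hb, hb1, h1, h2⟩
    -- key vanishing
    have key : ∀ i, r ≤ i + 1 → ab.1 i + ab.2 (i + 1) = 0 := by
      intro i hi
      rcases lt_or_ge i r' with hir | hir
      · have hterm : (ab.1 i + ab.2 (i + 1)) * p ^ (i + 1) ≤ m := by
          calc (ab.1 i + ab.2 (i + 1)) * p ^ (i + 1)
              ≤ ∑ j ∈ Finset.range r', (ab.1 j + ab.2 (j + 1)) * p ^ (j + 1) :=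
                Finset.single_le_sum (f := fun j => (ab.1 j + ab.2 (j + 1)) * p ^ (j + 1))
                  (fun j _ => Nat.zero_le _) (Finset.mem_range.mpr hir)
            _ ≤ m := by omega
        have hpow : p ^ r ≤ p ^ (i + 1) := Nat.pow_le_pow_right hp1 hi
        have : (ab.1 i + ab.2 (i + 1)) * p ^ (i + 1) < 1 * p ^ (i + 1) := by
          rw [one_mul]; omega
        have := Nat.lt_of_mul_lt_mul_right this
        omega
      · have := ha i hir
        have := hb (i + 1) (by omega)
        omega
    have ha' : ∀ i, r ≤ i → ab.1 i = 0 := fun i hi => by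
      have := key i (by omega); omega
    have hb' : ∀ i, r ≤ i → ab.2 i = 0 := by
      intro i hi
      match i, hi with
      | (j + 1), hi => have := key j (by omega); omega
      | 0, hi => omega
    have hsub : Finset.range r ⊆ Finset.range r' := Finset.range_subset_range.mpr hr'
    have e1 : ∑ i ∈ Finset.range r', ab.1 i = ∑ i ∈ Finset.range r, ab.1 i :=
      (Finset.sum_subset hsub (fun i _ hi => ha' i (by simpa using hi))).symm
    have e2 : ∑ i ∈ Finset.range r', ab.2 i = ∑ i ∈ Finset.range r, ab.2 i :=
      (Finset.sum_subset hsub (fun i _ hi => hb' i (by simpa using hi))).symm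
    have e3 : ∑ i ∈ Finset.range r', (ab.1 i + ab.2 (i + 1)) * p ^ (i + 1)
        = ∑ i ∈ Finset.range r, (ab.1 i + ab.2 (i + 1)) * p ^ (i + 1) := by
      refine (Finset.sum_subset hsub (fun i _ hi => ?_)).symm
      have hri : r ≤ i := by simpa using hi
      have := key i (by omega)
      simp [this]
    exact ⟨ha', hb', hb1, by rw [← e1, ← e2]; exact h1, by rw [← e3]; exact h2⟩
  · rintro ⟨ha, hb, hb1, h1, h2⟩
    have hsub : Finset.range r ⊆ Finset.range r' := Finset.range_subset_range.mpr hr'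
    have e1 : ∑ i ∈ Finset.range r', ab.1 i = ∑ i ∈ Finset.range r, ab.1 i :=
      (Finset.sum_subset hsub (fun i _ hi => ha i (by simpa using hi))).symm
    have e2 : ∑ i ∈ Finset.range r', ab.2 i = ∑ i ∈ Finset.range r, ab.2 i :=
      (Finset.sum_subset hsub (fun i _ hi => hb i (by simpa using hi))).symm
    have e3 : ∑ i ∈ Finset.range r', (ab.1 i + ab.2 (i + 1)) * p ^ (i + 1)
        = ∑ i ∈ Finset.range r, (ab.1 i + ab.2 (i + 1)) * p ^ (i + 1) := by
      refine (Finset.sum_subset hsub (fun i _ hi => ?_)).symm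
      have hri : r ≤ i := by simpa using hi
      have h1' := ha i hri
      have h2' := hb (i + 1) (by omega)
      simp [h1', h2']
    exact ⟨fun i hi => ha i (le_trans hr' hi), fun i hi => hb i (le_trans hr' hi), hb1,
      by rw [e1, e2]; exact h1, by rw [e3]; exact h2⟩
end

section
/- Let p be an odd prime and m, n ≥ 0 integers. If p divides m, then N(m,n) = N(m+1, n+1). -/
/-- Stability: if `1 ≤ r` and `m < p ^ r` then `S_{r+1}(m,n) = S_r(m,n)`. -/
lemma solset_stab (p r m n : ℕ) (hr : 1 ≤ r) (hm : m < p ^ r) :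
    SolSet p (r + 1) m n = SolSet p r m n := by
  have hp1 : 1 ≤ p := by
    rcases Nat.eq_zero_or_pos p with h | h
    · subst h
      rw [Nat.zero_pow (by omega)] at hm
      omega
    · exact h
  have hpow : p ^ r ≤ p ^ (r + 1) := Nat.pow_le_pow_right hp1 (by omega)
  ext ⟨a, b⟩
  simp only [SolSet, Set.mem_setOf_eq]
  constructor
  · rintro ⟨ha, hb, hb1, hn, hm'⟩
    have hbr1 : b (r + 1) = 0 := hb _ le_rfl
    have hterm : ∀ j < r + 1, (a j + b (j + 1)) * p ^ (j + 1) ≤ m := by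
      intro j hj
      have h1 : (a j + b (j + 1)) * p ^ (j + 1)
          ≤ ∑ i ∈ Finset.range (r + 1), (a i + b (i + 1)) * p ^ (i + 1) :=
        Finset.single_le_sum (f := fun i => (a i + b (i + 1)) * p ^ (i + 1))
          (fun i _ => Nat.zero_le _) (Finset.mem_range.mpr hj)
      omega
    have har : a r = 0 := by
      by_contra h
      have h1 := hterm r (by omega)
      have h2 : p ^ (r + 1) ≤ (a r + b (r + 1)) * p ^ (r + 1) :=
        le_mul_of_one_le_left (Nat.zero_le _) (by omega)
      omega
    have hbr : b r = 0 := by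
      by_contra h
      have h1 := hterm (r - 1) (by omega)
      have heq : r - 1 + 1 = r := by omega
      rw [heq] at h1
      have h2 : p ^ r ≤ (a (r - 1) + b r) * p ^ r :=
        le_mul_of_one_le_left (Nat.zero_le _) (by omega)
      omega
    rw [Finset.sum_range_succ, Finset.sum_range_succ, har, hbr] at hn
    rw [Finset.sum_range_succ, har, hbr1] at hm'
    refine ⟨fun i hi => ?_, fun i hi => ?_, hb1, by omega, by omega⟩
    · rcases eq_or_ne i r with rfl | h
      · exact har
      · exact ha i (by omega)
    · rcases eq_or_ne i r with rfl | h
      · exact hbr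
      · exact hb i (by omega)
  · rintro ⟨ha, hb, hb1, hn, hm'⟩
    have har : a r = 0 := ha r le_rfl
    have hbr : b r = 0 := hb r le_rfl
    have hbr1 : b (r + 1) = 0 := hb (r + 1) (by omega)
    refine ⟨fun i hi => ha i (by omega), fun i hi => hb i (by omega), hb1, ?_, ?_⟩
    · rw [Finset.sum_range_succ, Finset.sum_range_succ, har, hbr]
      omega
    · rw [Finset.sum_range_succ, har, hbr1]
      omega

lemma dvd_solsum (p r : ℕ) (a b : ℕ → ℕ) :
    p ∣ ∑ i ∈ Finset.range r, (a i + b (i + 1)) * p ^ (i + 1) :=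
  Finset.dvd_sum fun i _ =>
    Dvd.dvd.mul_left (dvd_pow_self p (Nat.succ_ne_zero i)) _

lemma b0_eq_zero {p r m n : ℕ} (hp2 : 2 ≤ p) (hdvd : p ∣ m) {a b : ℕ → ℕ}
    (h : (a, b) ∈ SolSet p r m n) : b 0 = 0 := by
  obtain ⟨-, -, hb1, -, hm⟩ := h
  obtain ⟨k, hk⟩ := dvd_solsum p r a b
  obtain ⟨l, hl⟩ := hdvd
  have hb0 : b 0 ≤ 1 := hb1 0
  simp only at hm
  have hd : p ∣ b 0 := by
    have heq : b 0 = p * l - p * k := by omega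
    rw [heq]
    exact Nat.dvd_sub ⟨l, rfl⟩ ⟨k, rfl⟩
  exact Nat.eq_zero_of_dvd_of_lt hd (by omega)

lemma b0_eq_one {p r m n : ℕ} (hp2 : 2 ≤ p) (hdvd : p ∣ m) {a b : ℕ → ℕ}
    (h : (a, b) ∈ SolSet p r (m + 1) (n + 1)) : b 0 = 1 := by
  obtain ⟨-, -, hb1, -, hm⟩ := h
  obtain ⟨k, hk⟩ := dvd_solsum p r a b
  obtain ⟨l, hl⟩ := hdvd
  have hb0 : b 0 ≤ 1 := hb1 0
  simp only at hm
  rcases Nat.le_one_iff_eq_zero_or_eq_one.mp hb0 with h0 | h1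
  · exfalso
    have h2 : p * k - p * l = 1 := by omega
    have h3 : p ∣ 1 := h2 ▸ Nat.dvd_sub ⟨k, rfl⟩ ⟨l, rfl⟩
    exact absurd (Nat.le_of_dvd one_pos h3) (by omega)
  · exact h1

/-- Flipping `b 0` gives a bijection between `S_r(m,n)` and `S_r(m+1,n+1)`
whenever `b 0` is forced (here stated as a membership transfer). -/
lemma mem_flip (p r m n : ℕ) (hr : 1 ≤ r) (a b : ℕ → ℕ) (hb0 : b 0 = 0) :
    (a, b) ∈ SolSet p r m n ↔
      (a, Function.update b 0 1) ∈ SolSet p r (m + 1) (n + 1) := by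
  obtain ⟨s, rfl⟩ : ∃ s, r = s + 1 := ⟨r - 1, by omega⟩
  have hupd : ∀ i, i ≠ 0 → Function.update b 0 1 i = b i :=
    fun i h => Function.update_of_ne h _ _
  have hsum1 : ∑ i ∈ Finset.range (s + 1), Function.update b 0 1 i
      = (∑ i ∈ Finset.range (s + 1), b i) + 1 := by
    rw [Finset.sum_range_succ', Finset.sum_range_succ']
    have h1 : ∀ i ∈ Finset.range s, Function.update b 0 1 (i + 1) = b (i + 1) :=
      fun i _ => hupd (i + 1) (Nat.succ_ne_zero i)
    rw [Finset.sum_congr rfl h1, Function.update_self, hb0]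
  have hsum2 : ∑ i ∈ Finset.range (s + 1),
        (a i + Function.update b 0 1 (i + 1)) * p ^ (i + 1)
      = ∑ i ∈ Finset.range (s + 1), (a i + b (i + 1)) * p ^ (i + 1) := by
    refine Finset.sum_congr rfl fun i _ => ?_
    rw [hupd (i + 1) (Nat.succ_ne_zero i)]
  simp only [SolSet, Set.mem_setOf_eq]
  constructor
  · rintro ⟨ha, hb, hb1, hn, hm⟩
    refine ⟨ha, fun i hi => ?_, fun i => ?_, ?_, ?_⟩
    · rw [hupd i (by omega)]; exact hb i hi
    · rcases eq_or_ne i 0 with rfl | h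
      · rw [Function.update_self]
      · rw [hupd i h]; exact hb1 i
    · rw [hsum1]; omega
    · rw [Function.update_self, hsum2]; omega
  · rintro ⟨ha, hb, hb1, hn, hm⟩
    rw [hsum1] at hn
    rw [Function.update_self, hsum2] at hm
    refine ⟨ha, fun i hi => ?_, fun i => ?_, by omega, by omega⟩
    · rw [← hupd i (by omega)]; exact hb i hi
    · rcases eq_or_ne i 0 with rfl | h
      · omega
      · rw [← hupd i h]; exact hb1 i

lemma ncard_flip (p r m n : ℕ) (hp : p.Prime) (hr : 1 ≤ r) (hdvd : p ∣ m) :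
    Ncard p r m n = Ncard p r (m + 1) (n + 1) := by
  have hp2 : 2 ≤ p := hp.two_le
  apply Nat.card_congr
  refine ⟨fun x => ⟨(x.1.1, Function.update x.1.2 0 1), ?_⟩,
          fun y => ⟨(y.1.1, Function.update y.1.2 0 0), ?_⟩, ?_, ?_⟩
  · obtain ⟨⟨a, b⟩, hx⟩ := x
    exact (mem_flip p r m n hr a b (b0_eq_zero hp2 hdvd hx)).mp hx
  · obtain ⟨⟨a, b⟩, hy⟩ := y
    have hb0 : b 0 = 1 := b0_eq_one hp2 hdvd hy
    have hupd : Function.update (Function.update b 0 0) 0 1 = b := by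
      rw [Function.update_idem]
      exact Function.update_eq_self_iff.mpr hb0.symm
    refine (mem_flip p r m n hr a (Function.update b 0 0)
      (Function.update_self _ _ _)).mpr ?_
    rw [hupd]
    exact hy
  · rintro ⟨⟨a, b⟩, hx⟩
    have hb0 : b 0 = 0 := b0_eq_zero hp2 hdvd hx
    apply Subtype.ext
    have h2 : Function.update (Function.update b 0 1) 0 0 = b := by
      rw [Function.update_idem]
      exact Function.update_eq_self_iff.mpr hb0.symm
    simp [h2]
  · rintro ⟨⟨a, b⟩, hy⟩
    have hb0 : b 0 = 1 := b0_eq_one hp2 hdvd hy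
    apply Subtype.ext
    have h2 : Function.update (Function.update b 0 0) 0 1 = b := by
      rw [Function.update_idem]
      exact Function.update_eq_self_iff.mpr hb0.symm
    simp [h2]

/-- for an odd prime `p`, if `p ∣ m` then `N(m,n) = N(m+1, n+1)`. -/
theorem stmt4 (p : ℕ) (hp : p.Prime) (hodd : Odd p) (m n : ℕ) (hdvd : p ∣ m) :
    Nstab p (m : ℤ) (n : ℤ) = Nstab p ((m : ℤ) + 1) ((n : ℤ) + 1) := by
  have hp2 : 2 ≤ p := hp.two_le
  have hm1 : ((m : ℤ) + 1).toNat = m + 1 := by omega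
  have hn1 : ((n : ℤ) + 1).toNat = n + 1 := by omega
  rw [Nstab, Nstab, if_pos ⟨Int.ofNat_nonneg m, Int.ofNat_nonneg n⟩,
    if_pos ⟨by omega, by omega⟩, Int.toNat_natCast, Int.toNat_natCast, hm1, hn1]
  have hstab : Ncard p (m + 1) m n = Ncard p (m + 1 + 1) m n := by
    unfold Ncard
    rw [solset_stab p (m + 1) m n (by omega)
      (lt_of_lt_of_le (Nat.lt_two_pow_self (n := m))
        (le_trans (Nat.pow_le_pow_right (by omega) (by omega))
          (Nat.pow_le_pow_left hp2 (m + 1))))]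
  rw [hstab]
  exact ncard_flip p (m + 1 + 1) m n hp (by omega) hdvd
end

section
/- Let p be an odd prime and m, n ≥ 0 integers with p dividing m. Then N(m,n) = 0 whenever n > 2m/p, and N(m,n) = 1 when n = 2m/p. -/
lemma key (p r k n : ℕ) (hp : p.Prime) (ab : (ℕ → ℕ) × (ℕ → ℕ))
    (h : ab ∈ SolSet p r (p * k) n) :
    ab.2 0 = 0 ∧
    (∑ i ∈ Finset.range r, ab.1 i) + (∑ i ∈ Finset.range r, ab.2 i) ≤ k ∧
    n = 2 * (∑ i ∈ Finset.range r, ab.1 i) + (∑ i ∈ Finset.range r, ab.2 i) ∧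
    (∑ i ∈ Finset.range r, (ab.1 i + ab.2 (i + 1)) * p ^ (i + 1)) = p * k ∧
    (∑ i ∈ Finset.range r, ab.2 (i + 1)) = ∑ i ∈ Finset.range r, ab.2 i := by
  obtain ⟨ha0, hb0, hb1, hn, hm⟩ := h
  have hp2 := hp.two_le
  have hdvdsum : p ∣ ∑ i ∈ Finset.range r, (ab.1 i + ab.2 (i + 1)) * p ^ (i + 1) := by
    apply Finset.dvd_sum
    intro i _
    exact Dvd.dvd.mul_left (dvd_pow_self p (Nat.succ_ne_zero i)) _
  have hb00 : ab.2 0 = 0 := by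
    have hd : p ∣ ab.2 0 := by
      have := (Nat.dvd_add_right hdvdsum).mp
        (by rw [add_comm]; exact hm ▸ Dvd.intro k rfl)
      exact this
    rcases Nat.eq_zero_or_pos (ab.2 0) with h0 | h0
    · exact h0
    · have := Nat.le_of_dvd h0 hd
      have := hb1 0
      omega
  rw [hb00, zero_add] at hm
  -- shift identity for b sums
  have hshift : (∑ i ∈ Finset.range r, ab.2 (i + 1)) = ∑ i ∈ Finset.range r, ab.2 i := by
    have h1 := Finset.sum_range_succ' ab.2 r
    have h2 := Finset.sum_range_succ ab.2 r
    rw [hb0 r le_rfl] at h2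
    rw [hb00] at h1
    omega
  -- lower bound
  have hlow : p * ((∑ i ∈ Finset.range r, ab.1 i) + (∑ i ∈ Finset.range r, ab.2 i)) ≤ p * k := by
    calc p * ((∑ i ∈ Finset.range r, ab.1 i) + (∑ i ∈ Finset.range r, ab.2 i))
        = ∑ i ∈ Finset.range r, (ab.1 i + ab.2 (i + 1)) * p := by
          rw [← hshift, ← Finset.sum_add_distrib, Finset.mul_sum]
          exact Finset.sum_congr rfl fun i _ => by ring
      _ ≤ ∑ i ∈ Finset.range r, (ab.1 i + ab.2 (i + 1)) * p ^ (i + 1) := by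
          apply Finset.sum_le_sum
          intro i _
          apply Nat.mul_le_mul_left
          calc p = p ^ 1 := (pow_one p).symm
            _ ≤ p ^ (i + 1) := Nat.pow_le_pow_right (by omega) (by omega)
      _ = p * k := hm
  have hAB := Nat.le_of_mul_le_mul_left hlow (by omega)
  exact ⟨hb00, hAB, hn.symm, hm, hshift⟩


/-- for an odd prime `p` with `p ∣ m`, `N(m,n) = 0` when `n > 2m/p`
and `N(m,n) = 1` when `n = 2m/p`. -/
theorem stmt5 (p : ℕ) (hp : p.Prime) (hodd : Odd p) (m n : ℕ) (hdvd : p ∣ m) :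
    (2 * m / p < n → Nstab p (m : ℤ) (n : ℤ) = 0) ∧
    (n = 2 * m / p → Nstab p (m : ℤ) (n : ℤ) = 1) := by
  obtain ⟨k, rfl⟩ := hdvd
  have hp2 := hp.two_le
  have hdiv : 2 * (p * k) / p = 2 * k := by
    rw [show 2 * (p * k) = (2 * k) * p by ring, Nat.mul_div_cancel _ (by omega)]
  rw [hdiv]
  have hstab : Nstab p ((p * k : ℕ) : ℤ) ((n : ℕ) : ℤ) = Ncard p (p * k + 1) (p * k) n := by
    rw [Nstab, if_pos ⟨Int.natCast_nonneg _, Int.natCast_nonneg _⟩,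
      Int.toNat_natCast, Int.toNat_natCast]
  set r := p * k + 1 with hr
  constructor
  · intro hlt
    rw [hstab]
    have hempty : SolSet p r (p * k) n = ∅ := by
      rw [Set.eq_empty_iff_forall_notMem]
      intro ab hab
      obtain ⟨_, hAB, hn, _, _⟩ := key p r k n hp ab hab
      omega
    rw [Ncard, hempty]
    simp
  · intro hn2k
    rw [hstab]
    subst hn2k
    have hsingle : SolSet p r (p * k) (2 * k) =
        {((fun i => if i = 0 then k else 0), fun _ => 0)} := by
      ext ab
      constructor
      · intro hab
        obtain ⟨hb00, hAB, hn, hm, hshift⟩ := key p r k (2 * k) hp ab hab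
        obtain ⟨ha0, hb0, hb1, _, _⟩ := hab
        have hB : (∑ i ∈ Finset.range r, ab.2 i) = 0 := by omega
        have hA : (∑ i ∈ Finset.range r, ab.1 i) = k := by omega
        have hbz : ∀ i, ab.2 i = 0 := by
          intro i
          rcases Nat.lt_or_ge i r with hi | hi
          · exact Finset.sum_eq_zero_iff.mp hB i (Finset.mem_range.mpr hi)
          · exact hb0 i hi
        -- now the weight sum has no b
        have hm' : (∑ i ∈ Finset.range r, ab.1 i * p ^ (i + 1)) = p * k := by
          rw [← hm]
          apply Finset.sum_congr rfl
          intro i _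
          rw [hbz (i + 1), add_zero]
        have hub : (∑ i ∈ Finset.range r, ab.1 i * p) ≤
            ∑ i ∈ Finset.range r, ab.1 i * p ^ (i + 1) := by
          apply Finset.sum_le_sum
          intro i _
          apply Nat.mul_le_mul_left
          calc p = p ^ 1 := (pow_one p).symm
            _ ≤ p ^ (i + 1) := Nat.pow_le_pow_right (by omega) (by omega)
        have hsum_p : (∑ i ∈ Finset.range r, ab.1 i * p) = p * k := by
          rw [← Finset.sum_mul, hA, mul_comm]
        have heq : ∀ i ∈ Finset.range r, ab.1 i * p = ab.1 i * p ^ (i + 1) := by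
          apply (Finset.sum_eq_sum_iff_of_le ?_).mp
          · rw [hsum_p, hm']
          · intro i _
            apply Nat.mul_le_mul_left
            calc p = p ^ 1 := (pow_one p).symm
              _ ≤ p ^ (i + 1) := Nat.pow_le_pow_right (by omega) (by omega)
        have haz : ∀ i, 1 ≤ i → ab.1 i = 0 := by
          intro i hi
          rcases Nat.lt_or_ge i r with hir | hir
          · by_contra hne
            have hpos : 0 < ab.1 i := Nat.pos_of_ne_zero hne
            have := heq i (Finset.mem_range.mpr hir)
            have hplt : p < p ^ (i + 1) := by
              calc p = p ^ 1 := (pow_one p).symm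
                _ < p ^ (i + 1) := Nat.pow_lt_pow_right (by omega) (by omega)
            have := (Nat.mul_lt_mul_left hpos).mpr hplt
            omega
          · exact ha0 i hir
        have ha00 : ab.1 0 = k := by
          have : (∑ i ∈ Finset.range r, ab.1 i) = ab.1 0 := by
            rw [Finset.sum_eq_single 0]
            · intro i _ hi; exact haz i (by omega)
            · intro h; exact absurd (Finset.mem_range.mpr (by omega)) h
          omega
        have : ab = ((fun i => if i = 0 then k else 0), fun _ => 0) := by
          ext i
          · simp only
            by_cases hi : i = 0
            · subst hi; simp [ha00]
            · simp [hi, haz i (by omega)]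
          · simp [hbz i]
        simpa using this
      · intro hab
        simp only [Set.mem_singleton_iff] at hab
        subst hab
        refine ⟨?_, ?_, ?_, ?_, ?_⟩
        · intro i hi; simp; omega
        · intro i hi; rfl
        · intro i; simp
        · simp [Finset.sum_ite_eq', Finset.mem_range]
        · simp only [add_zero, ite_mul, zero_mul]
          rw [Finset.sum_ite_eq' (Finset.range r) 0 (fun i => k * p ^ (i + 1))]
          simp only [Finset.mem_range, if_pos (show 0 < r by omega)]
          ring
    rw [Ncard, hsingle]
    simp
end

section
/- Let p be an odd prime and m, n ≥ 0 integers. Then: (i) if p divides m, N(m,n) = Σ_{a=0}^{⌊n/2⌋} N(m/p − a, n − 2a); (ii) if m ≡ 1 (mod p), N(m,n) = Σ_{a=0}^{⌊n/2⌋} N((m−1)/p − a, n − 2a − 1); (iii) if m is congruent to neither 0 nor 1 modulo p, then N(m,n) = 0. (Here terms with negative first argument are 0 by convention.) -/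
/- ### Auxiliary lemmas -/

lemma mem_solset_b0 {p r m n : ℕ} (hp : 2 ≤ p) {x : (ℕ → ℕ) × (ℕ → ℕ)}
    (hx : x ∈ SolSet p r m n) : m % p = x.2 0 := by
  obtain ⟨h1, h2, h3, h4, h5⟩ := hx
  have hdvd : p ∣ ∑ i ∈ Finset.range r, (x.1 i + x.2 (i + 1)) * p ^ (i + 1) :=
    Finset.dvd_sum fun i _ => Dvd.dvd.mul_left (dvd_pow_self p (Nat.succ_ne_zero i)) _
  obtain ⟨t, ht⟩ := hdvd
  have hb : x.2 0 < p := lt_of_le_of_lt (h3 0) (by omega)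
  rw [← h5, ht, Nat.add_mul_mod_self_left, Nat.mod_eq_of_lt hb]

lemma solset_finite (p r m n : ℕ) : (SolSet p r m n).Finite := by
  classical
  have hinj : Set.InjOn
      (fun x : (ℕ → ℕ) × (ℕ → ℕ) =>
        ((fun i : Fin r => (⟨min (x.1 i) n, by omega⟩ : Fin (n + 1))),
         (fun i : Fin r => (⟨min (x.2 i) 1, by omega⟩ : Fin 2))))
      (SolSet p r m n) := by
    rintro x hx y hy h
    obtain ⟨hx1, hx2, hx3, hx4, _⟩ := hx
    obtain ⟨hy1, hy2, hy3, hy4, _⟩ := hy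
    have hxb : ∀ i, i < r → x.1 i ≤ n := by
      intro i hi
      have : x.1 i ≤ ∑ j ∈ Finset.range r, x.1 j :=
        Finset.single_le_sum (fun j _ => Nat.zero_le _) (Finset.mem_range.2 hi)
      omega
    have hyb : ∀ i, i < r → y.1 i ≤ n := by
      intro i hi
      have : y.1 i ≤ ∑ j ∈ Finset.range r, y.1 j :=
        Finset.single_le_sum (fun j _ => Nat.zero_le _) (Finset.mem_range.2 hi)
      omega
    have h1 := congrArg Prod.fst h
    have h2 := congrArg Prod.snd h
    simp only at h1 h2
    refine Prod.ext (funext fun i => ?_) (funext fun i => ?_)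
    · by_cases hi : i < r
      · have := congrFun h1 ⟨i, hi⟩
        simp only [Fin.mk.injEq] at this
        have e1 := hxb i hi
        have e2 := hyb i hi
        omega
      · rw [hx1 i (by omega), hy1 i (by omega)]
    · by_cases hi : i < r
      · have := congrFun h2 ⟨i, hi⟩
        simp only [Fin.mk.injEq] at this
        have e1 := hx3 i
        have e2 := hy3 i
        omega
      · rw [hx2 i (by omega), hy2 i (by omega)]
  exact Set.Finite.of_finite_image (Set.toFinite _) hinj

lemma solset_stable {p r s m n : ℕ} (hp : 1 ≤ p) (hrs : r ≤ s) (hm : m < p ^ r) :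
    SolSet p s m n = SolSet p r m n := by
  have hsums : ∀ x : (ℕ → ℕ) × (ℕ → ℕ), (∀ i, r ≤ i → x.1 i = 0) → (∀ i, r ≤ i → x.2 i = 0) →
      (∑ i ∈ Finset.range s, x.1 i = ∑ i ∈ Finset.range r, x.1 i) ∧
      (∑ i ∈ Finset.range s, x.2 i = ∑ i ∈ Finset.range r, x.2 i) ∧
      (∑ i ∈ Finset.range s, (x.1 i + x.2 (i + 1)) * p ^ (i + 1)
        = ∑ i ∈ Finset.range r, (x.1 i + x.2 (i + 1)) * p ^ (i + 1)) := by
    intro x ha hb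
    refine ⟨(Finset.sum_subset (Finset.range_subset_range.2 hrs) ?_).symm,
      (Finset.sum_subset (Finset.range_subset_range.2 hrs) ?_).symm,
      (Finset.sum_subset (Finset.range_subset_range.2 hrs) ?_).symm⟩ <;>
    · intro i hi hir
      simp only [Finset.mem_range] at hi hir
      simp [ha i (by omega), hb i (by omega), hb (i + 1) (by omega)]
  ext x
  constructor
  · rintro ⟨h1, h2, h3, h4, h5⟩
    have key : ∀ j, j < s → r ≤ j + 1 → x.1 j = 0 ∧ x.2 (j + 1) = 0 := by
      intro j hj hrj
      have hterm : (x.1 j + x.2 (j + 1)) * p ^ (j + 1) ≤ m := by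
        have h := Finset.single_le_sum
          (f := fun i => (x.1 i + x.2 (i + 1)) * p ^ (i + 1))
          (fun i _ => Nat.zero_le _) (Finset.mem_range.2 hj)
        omega
      by_contra hcon
      have hpos : 1 ≤ x.1 j + x.2 (j + 1) := by omega
      have h1' : p ^ (j + 1) ≤ (x.1 j + x.2 (j + 1)) * p ^ (j + 1) :=
        Nat.le_mul_of_pos_left _ hpos
      have h2' : p ^ r ≤ p ^ (j + 1) := Nat.pow_le_pow_right hp hrj
      omega
    have ha : ∀ i, r ≤ i → x.1 i = 0 := by
      intro i hi
      by_cases his : i < s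
      · exact (key i his (by omega)).1
      · exact h1 i (by omega)
    have hb : ∀ i, r ≤ i → x.2 i = 0 := by
      intro i hi
      rcases i with _ | j
      · -- r = 0, so m < p ^ 0 = 1, m = 0
        have hm0 : m = 0 := by
          have : p ^ r = 1 := by
            have : r = 0 := by omega
            simp [this]
          omega
        omega
      · by_cases hjs : j < s
        · exact (key j hjs (by omega)).2
        · exact h2 (j + 1) (by omega)
    obtain ⟨e1, e2, e3⟩ := hsums x ha hb
    exact ⟨ha, hb, h3, by rw [← e1, ← e2]; exact h4, by rw [← e3]; exact h5⟩
  · rintro ⟨h1, h2, h3, h4, h5⟩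
    obtain ⟨e1, e2, e3⟩ := hsums x h1 h2
    exact ⟨fun i hi => h1 i (by omega), fun i hi => h2 i (by omega), h3,
      by rw [e1, e2]; exact h4, by rw [e3]; exact h5⟩

lemma lt_pow_of_le {p x r : ℕ} (hp : 2 ≤ p) (h : x ≤ r) : x < p ^ r :=
  lt_of_lt_of_le (Nat.lt_two_pow_self (n := x))
    (le_trans (Nat.pow_le_pow_left hp x) (Nat.pow_le_pow_right (by omega) h))

lemma ncard_stable {p m n : ℕ} (hp : 1 ≤ p) {r s : ℕ} (hr : m < p ^ r) (hs : m < p ^ s) :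
    Ncard p r m n = Ncard p s m n := by
  rcases le_total r s with h | h
  · unfold Ncard; rw [solset_stable hp h hr]
  · unfold Ncard; rw [solset_stable hp h hs]

/-- The reconstruction map prepending `a` and `c` to the sequences. -/
def gmap (a c : ℕ) (y : (ℕ → ℕ) × (ℕ → ℕ)) : (ℕ → ℕ) × (ℕ → ℕ) :=
  (fun i => match i with | 0 => a | (j + 1) => y.1 j,
   fun i => match i with | 0 => c | (j + 1) => y.2 j)

@[simp] lemma gmap_fst_zero (a c : ℕ) (y : (ℕ → ℕ) × (ℕ → ℕ)) : (gmap a c y).1 0 = a := rfl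
@[simp] lemma gmap_fst_succ (a c : ℕ) (y : (ℕ → ℕ) × (ℕ → ℕ)) (j : ℕ) :
    (gmap a c y).1 (j + 1) = y.1 j := rfl
@[simp] lemma gmap_snd_zero (a c : ℕ) (y : (ℕ → ℕ) × (ℕ → ℕ)) : (gmap a c y).2 0 = c := rfl
@[simp] lemma gmap_snd_succ (a c : ℕ) (y : (ℕ → ℕ) × (ℕ → ℕ)) (j : ℕ) :
    (gmap a c y).2 (j + 1) = y.2 j := rfl

lemma gmap_inj (a c : ℕ) : Function.Injective (gmap a c) := by
  intro y z h
  have h1 := congrArg Prod.fst h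
  have h2 := congrArg Prod.snd h
  exact Prod.ext (funext fun i => congrFun h1 (i + 1)) (funext fun i => congrFun h2 (i + 1))

lemma sum_weight_factor (p k : ℕ) (f : ℕ → ℕ) :
    ∑ i ∈ Finset.range k, f i * p ^ (i + 1) = p * ∑ i ∈ Finset.range k, f i * p ^ i := by
  rw [Finset.mul_sum]
  exact Finset.sum_congr rfl fun i _ => by ring

lemma fiber_eq (p r m n a c : ℕ) (hp : 2 ≤ p) (hc1 : c ≤ 1) (hc : m % p = c)
    (ham : a * p + c ≤ m) (han : 2 * a + c ≤ n) :
    {x | x ∈ SolSet p (r + 1) m n ∧ x.1 0 = a}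
      = gmap a c '' SolSet p r (m / p - a) (n - c - 2 * a) := by
  have hppos : 0 < p := by omega
  have hq : p * (m / p) + c = m := by rw [← hc]; exact Nat.div_add_mod m p
  have ha' : a ≤ m / p := (Nat.le_div_iff_mul_le hppos).2 (by omega)
  ext x
  simp only [Set.mem_setOf_eq, Set.mem_image]
  constructor
  · rintro ⟨hx, hx0⟩
    have hb0 : x.2 0 = c := by rw [← hc]; exact (mem_solset_b0 hp hx).symm
    obtain ⟨h1, h2, h3, h4, h5⟩ := hx
    refine ⟨(fun i => x.1 (i + 1), fun i => x.2 (i + 1)), ⟨?_, ?_, ?_, ?_, ?_⟩, ?_⟩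
    · intro i hi; exact h1 (i + 1) (by omega)
    · intro i hi; exact h2 (i + 1) (by omega)
    · intro i; exact h3 (i + 1)
    · have hA := Finset.sum_range_succ' (fun i => x.1 i) r
      have hB := Finset.sum_range_succ' (fun i => x.2 i) r
      rw [hA, hB, hx0, hb0] at h4
      simp only
      omega
    · simp only
      rw [sum_weight_factor p (r + 1) (fun i => x.1 i + x.2 (i + 1)),
        Finset.sum_range_succ' (fun i => (x.1 i + x.2 (i + 1)) * p ^ i) r] at h5
      simp only [pow_zero, mul_one, pow_succ] at h5
      rw [hx0, hb0] at h5
      have hfix : ∀ i ∈ Finset.range r,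
          (x.1 (i + 1) + x.2 (i + 1 + 1)) * (p ^ i * p)
            = (x.1 (i + 1) + x.2 (i + 1 + 1)) * p ^ (i + 1) := by
        intro i _; rw [pow_succ]
      rw [Finset.sum_congr rfl hfix] at h5
      set W := ∑ i ∈ Finset.range r, (x.1 (i + 1) + x.2 (i + 1 + 1)) * p ^ (i + 1) with hW
      -- h5 : c + p * (W + (a + x.2 1)) = m
      have h7 : c + p * (W + (a + x.2 (0 + 1))) = c + p * (m / p) := by
        rw [h5, Nat.add_comm c]; exact hq.symm
      have h6 := Nat.add_left_cancel h7
      have key := Nat.eq_of_mul_eq_mul_left hppos h6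
      rw [← key]
      omega
    · refine Prod.ext (funext fun i => ?_) (funext fun i => ?_)
      · cases i with
        | zero => exact hx0.symm
        | succ j => rfl
      · cases i with
        | zero => exact hb0.symm
        | succ j => rfl
  · rintro ⟨y, ⟨k1, k2, k3, k4, k5⟩, rfl⟩
    refine ⟨⟨?_, ?_, ?_, ?_, ?_⟩, rfl⟩
    · intro i hi
      cases i with
      | zero => omega
      | succ j => exact k1 j (by omega)
    · intro i hi
      cases i with
      | zero => omega
      | succ j => exact k2 j (by omega)
    · intro i
      cases i with
      | zero => exact hc1
      | succ j => exact k3 j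
    · rw [Finset.sum_range_succ' (fun i => (gmap a c y).1 i) r,
        Finset.sum_range_succ' (fun i => (gmap a c y).2 i) r]
      simp only [gmap_fst_zero, gmap_fst_succ, gmap_snd_zero, gmap_snd_succ]
      omega
    · rw [sum_weight_factor p (r + 1) (fun i => (gmap a c y).1 i + (gmap a c y).2 (i + 1)),
        Finset.sum_range_succ' (fun i => ((gmap a c y).1 i + (gmap a c y).2 (i + 1)) * p ^ i) r]
      simp only [gmap_fst_zero, gmap_fst_succ, gmap_snd_zero, gmap_snd_succ,
        pow_zero, mul_one]
      have hfix : ∀ i ∈ Finset.range r,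
          (y.1 i + y.2 (i + 1)) * p ^ (i + 1)
            = (fun i => (y.1 i + y.2 (i + 1)) * p ^ (i + 1)) i := fun i _ => rfl
      have : (∑ i ∈ Finset.range r, (y.1 i + y.2 (i + 1)) * p ^ (i + 1)) + (a + y.2 0)
          = m / p := by omega
      rw [this]
      rw [Nat.add_comm c]
      exact hq

lemma fiber_empty (p r m n a c : ℕ) (hp : 2 ≤ p) (hc : m % p = c)
    (h : ¬(a * p + c ≤ m ∧ 2 * a + c ≤ n)) :
    {x | x ∈ SolSet p (r + 1) m n ∧ x.1 0 = a} = ∅ := by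
  ext x
  simp only [Set.mem_setOf_eq, Set.mem_empty_iff_false, iff_false, not_and]
  intro hx hx0
  have hb0 : x.2 0 = c := by rw [← hc]; exact (mem_solset_b0 hp hx).symm
  obtain ⟨h1, h2, h3, h4, h5⟩ := hx
  have hterm : (x.1 0 + x.2 1) * p
      ≤ ∑ i ∈ Finset.range (r + 1), (x.1 i + x.2 (i + 1)) * p ^ (i + 1) := by
    have h := Finset.single_le_sum (f := fun i => (x.1 i + x.2 (i + 1)) * p ^ (i + 1))
      (fun i _ => Nat.zero_le _) (Finset.mem_range.2 (show 0 < r + 1 by omega))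
    simpa using h
  have hap : a * p ≤ (x.1 0 + x.2 1) * p := Nat.mul_le_mul_right p (by omega)
  have ht1 : x.1 0 ≤ ∑ i ∈ Finset.range (r + 1), x.1 i := by
    have h := Finset.single_le_sum (f := fun i => x.1 i)
      (fun i _ => Nat.zero_le _) (Finset.mem_range.2 (show 0 < r + 1 by omega))
    simpa using h
  have ht2 : x.2 0 ≤ ∑ i ∈ Finset.range (r + 1), x.2 i := by
    have h := Finset.single_le_sum (f := fun i => x.2 i)
      (fun i _ => Nat.zero_le _) (Finset.mem_range.2 (show 0 < r + 1 by omega))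
    simpa using h
  omega

lemma card_step (p r m n c : ℕ) (hp : 2 ≤ p) (hc1 : c ≤ 1) (hc : m % p = c) :
    (SolSet p (r + 1) m n).ncard =
      ∑ a ∈ Finset.range (n / 2 + 1),
        (if a * p + c ≤ m ∧ 2 * a + c ≤ n
          then (SolSet p r (m / p - a) (n - c - 2 * a)).ncard else 0) := by
  classical
  have hfin : ∀ a : ℕ, ({x | x ∈ SolSet p (r + 1) m n ∧ x.1 0 = a}).Finite :=
    fun a => (solset_finite p (r + 1) m n).subset (fun x hx => hx.1)
  have hS : (SolSet p (r + 1) m n).Finite := solset_finite _ _ _ _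
  have hcover : hS.toFinset
      = (Finset.range (n / 2 + 1)).biUnion (fun a => (hfin a).toFinset) := by
    ext x
    simp only [Set.Finite.mem_toFinset, Finset.mem_biUnion, Finset.mem_range,
      Set.mem_setOf_eq]
    constructor
    · intro hx
      refine ⟨x.1 0, ?_, hx, rfl⟩
      obtain ⟨h1, h2, h3, h4, h5⟩ := hx
      have ht1 : x.1 0 ≤ ∑ i ∈ Finset.range (r + 1), x.1 i :=
        Finset.single_le_sum (fun i _ => Nat.zero_le _) (Finset.mem_range.2 (by omega))
      omega
    · rintro ⟨a, _, hx, _⟩; exact hx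
  have hdisj : ∀ a ∈ Finset.range (n / 2 + 1), ∀ b ∈ Finset.range (n / 2 + 1), a ≠ b →
      Disjoint ((hfin a).toFinset) ((hfin b).toFinset) := by
    intro a _ b _ hab
    rw [Finset.disjoint_left]
    intro x hxa hxb
    simp only [Set.Finite.mem_toFinset, Set.mem_setOf_eq] at hxa hxb
    exact hab (hxa.2 ▸ hxb.2 ▸ rfl)
  rw [Set.ncard_eq_toFinset_card _ hS, hcover, Finset.card_biUnion hdisj]
  refine Finset.sum_congr rfl fun a _ => ?_
  rw [← Set.ncard_eq_toFinset_card _ (hfin a)]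
  by_cases h : a * p + c ≤ m ∧ 2 * a + c ≤ n
  · rw [if_pos h, fiber_eq p r m n a c hp hc1 hc h.1 h.2,
      Set.ncard_image_of_injective _ (gmap_inj a c)]
  · rw [if_neg h, fiber_empty p r m n a c hp hc h, Set.ncard_empty]

lemma ncard_eq (p r m n : ℕ) : Ncard p r m n = (SolSet p r m n).ncard :=
  Nat.card_coe_set_eq _

lemma nstab_natCast (p u v : ℕ) : Nstab p (u : ℤ) (v : ℤ) = Ncard p (u + 1) u v := by
  simp [Nstab]

/-- the recursive formula for `N(m,n)`, an odd prime `p`. -/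
theorem stmt6 (p : ℕ) (hp : p.Prime) (hodd : Odd p) (m n : ℕ) :
    ((p ∣ m → Nstab p (m : ℤ) (n : ℤ) =
        ∑ a ∈ Finset.range (n / 2 + 1), Nstab p ((m : ℤ) / p - a) ((n : ℤ) - 2 * a)) ∧
     (m % p = 1 → Nstab p (m : ℤ) (n : ℤ) =
        ∑ a ∈ Finset.range (n / 2 + 1), Nstab p (((m : ℤ) - 1) / p - a) ((n : ℤ) - 2 * a - 1)) ∧
     (m % p ≠ 0 → m % p ≠ 1 → Nstab p (m : ℤ) (n : ℤ) = 0)) := by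
  have hp2 : 2 ≤ p := hp.two_le
  have hppos : 0 < p := by omega
  refine ⟨?_, ?_, ?_⟩
  · -- case p ∣ m
    intro hdvd
    obtain ⟨q, rfl⟩ := hdvd
    have hqdiv : p * q / p = q := Nat.mul_div_cancel_left q hppos
    have hqz : ((p * q : ℕ) : ℤ) / (p : ℤ) = (q : ℤ) := by
      push_cast
      exact Int.mul_ediv_cancel_left _ (by exact_mod_cast hppos.ne')
    rw [nstab_natCast, ncard_eq, card_step p (p * q) (p * q) n 0 hp2 (by omega)
      (Nat.mul_mod_right p q)]
    refine Finset.sum_congr rfl fun a ha => ?_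
    rw [Finset.mem_range] at ha
    rw [hqz]
    by_cases haq : a ≤ q
    · have hcond : a * p + 0 ≤ p * q ∧ 2 * a + 0 ≤ n := by
        constructor
        · have h1 : a * p ≤ q * p := Nat.mul_le_mul_right p haq
          have h2 : q * p = p * q := Nat.mul_comm q p
          omega
        · omega
      rw [if_pos hcond, hqdiv]
      have e1 : (q : ℤ) - (a : ℤ) = ((q - a : ℕ) : ℤ) := by omega
      have e2 : (n : ℤ) - 2 * (a : ℤ) = ((n - 2 * a : ℕ) : ℤ) := by omega
      rw [e1, e2, nstab_natCast, ← ncard_eq]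
      have hle : q - a ≤ p * q := le_trans (Nat.sub_le q a) (Nat.le_mul_of_pos_left q hppos)
      exact ncard_stable hppos (lt_pow_of_le hp2 hle) (lt_pow_of_le hp2 (by omega))
    · have hcond : ¬(a * p + 0 ≤ p * q ∧ 2 * a + 0 ≤ n) := by
        rintro ⟨h1, _⟩
        have h3 : q * p < a * p := (Nat.mul_lt_mul_right hppos).2 (by omega)
        have h2 : q * p = p * q := Nat.mul_comm q p
        omega
      rw [if_neg hcond, Nstab, if_neg (by rintro ⟨h1, _⟩; omega)]
  · -- case m % p = 1
    intro h1
    have hm1 : 1 ≤ m := by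
      rcases Nat.eq_zero_or_pos m with h | h
      · subst h; simp at h1
      · exact h
    have hq : p * (m / p) + 1 = m := by
      conv_rhs => rw [← Nat.div_add_mod m p, h1]
    set q := m / p with hqdef
    have hqdiv : (m - 1) / p = q := by
      have : m - 1 = p * q := by omega
      rw [this, Nat.mul_div_cancel_left q hppos]
    have hqz : ((m : ℤ) - 1) / (p : ℤ) = (q : ℤ) := by
      have : (m : ℤ) - 1 = (p : ℤ) * (q : ℤ) := by
        have := hq; push_cast [← this]; ring
      rw [this, Int.mul_ediv_cancel_left _ (by exact_mod_cast hppos.ne')]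
    rw [nstab_natCast, ncard_eq, card_step p m m n 1 hp2 le_rfl h1]
    refine Finset.sum_congr rfl fun a ha => ?_
    rw [Finset.mem_range] at ha
    rw [hqz]
    by_cases haq : a ≤ q
    · by_cases han : 2 * a + 1 ≤ n
      · have hcond : a * p + 1 ≤ m ∧ 2 * a + 1 ≤ n := by
          constructor
          · have h5 : a * p ≤ q * p := Nat.mul_le_mul_right p haq
            have h6 : q * p = p * q := Nat.mul_comm q p
            omega
          · exact han
        rw [if_pos hcond]
        have e1 : (q : ℤ) - (a : ℤ) = ((q - a : ℕ) : ℤ) := by omega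
        have e2 : (n : ℤ) - 2 * (a : ℤ) - 1 = ((n - 1 - 2 * a : ℕ) : ℤ) := by omega
        rw [e1, e2, nstab_natCast, ← ncard_eq]
        have hle : q - a ≤ m := by
          have : q ≤ p * q := Nat.le_mul_of_pos_left q hppos
          omega
        exact ncard_stable hppos (lt_pow_of_le hp2 hle) (lt_pow_of_le hp2 (by omega))
      · rw [if_neg (by rintro ⟨_, h2⟩; omega), Nstab,
          if_neg (by rintro ⟨_, h2⟩; omega)]
    · have hcond : ¬(a * p + 1 ≤ m ∧ 2 * a + 1 ≤ n) := by
        rintro ⟨hcc, _⟩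
        have h3 : q * p < a * p := (Nat.mul_lt_mul_right hppos).2 (by omega)
        have h2 : q * p = p * q := Nat.mul_comm q p
        omega
      rw [if_neg hcond, Nstab, if_neg (by rintro ⟨hcc, _⟩; omega)]
  · -- case m % p ∉ {0, 1}
    intro h0 h1
    rw [nstab_natCast, Ncard]
    have : SolSet p (m + 1) m n = ∅ := by
      ext x
      simp only [Set.mem_empty_iff_false, iff_false]
      intro hx
      have := mem_solset_b0 hp2 hx
      have hb := hx.2.2.1 0
      omega
    rw [this]
    simp
end

section
/- Let p be an odd prime and let n be an integer with 1 ≤ n ≤ 2p − 2. Then for every integer m ≥ 0, N(m,n) ≤ F(n), where F(n) is the n-th Fibonacci number. -/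
/- ---------- auxiliary lemmas ---------- -/

lemma sum_lt_pow (p : ℕ) (hp : 1 ≤ p) (c : ℕ → ℕ) (h : ∀ j, c j < p) (i : ℕ) :
    (∑ j ∈ Finset.range i, c j * p ^ j) < p ^ i := by
  induction i with
  | zero => simp
  | succ i ih =>
    rw [Finset.sum_range_succ]
    have h1 : c i * p ^ i ≤ (p - 1) * p ^ i :=
      Nat.mul_le_mul_right _ (by have := h i; omega)
    have h2 : p ^ i + (p - 1) * p ^ i = p ^ (i + 1) := by
      obtain ⟨q, rfl⟩ : ∃ q, p = q + 1 := ⟨p - 1, by omega⟩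
      simp [pow_succ]; ring
    omega

lemma digit_of_sum (p : ℕ) (hp : 2 ≤ p) (c : ℕ → ℕ) (R : ℕ) (h : ∀ j, c j < p)
    (i : ℕ) (hi : i < R) :
    ((∑ j ∈ Finset.range R, c j * p ^ j) / p ^ i) % p = c i := by
  have hppos : 0 < p ^ i := Nat.pow_pos (by omega)
  have hsplit : (∑ j ∈ Finset.range R, c j * p ^ j)
      = (∑ j ∈ Finset.range i, c j * p ^ j)
        + p ^ i * (c i + p * ∑ kk ∈ Finset.range (R - (i + 1)), c (i + 1 + kk) * p ^ kk) := by
    rw [Finset.range_eq_Ico, ← Finset.sum_Ico_consecutive _ (Nat.zero_le (i+1)) hi,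
      ← Finset.range_eq_Ico, Finset.sum_range_succ, Finset.sum_Ico_eq_sum_range]
    have : ∀ kk, c (i + 1 + kk) * p ^ (i + 1 + kk)
        = p ^ i * (p * (c (i + 1 + kk) * p ^ kk)) := by
      intro kk; rw [pow_add, pow_add]; ring
    rw [Finset.sum_congr rfl (fun kk _ => this kk), ← Finset.mul_sum, ← Finset.mul_sum]
    ring
  rw [hsplit, Nat.add_mul_div_left _ _ hppos,
    Nat.div_eq_of_lt (sum_lt_pow p (by omega) c h i), zero_add,
    Nat.add_mul_mod_self_left, Nat.mod_eq_of_lt (h i)]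

/-- the digit sequence attached to a pair `(a,b)` -/
def digitSeq (ab : (ℕ → ℕ) × (ℕ → ℕ)) : ℕ → ℕ
  | 0 => ab.2 0
  | (j+1) => ab.1 j + ab.2 (j+1)

lemma sol_digits {p r m n : ℕ} (hp : 2 ≤ p) (hn : n ≤ 2 * p - 2)
    {ab : (ℕ → ℕ) × (ℕ → ℕ)} (hab : ab ∈ SolSet p r m n) :
    ab.2 0 = m % p ∧ ∀ i, i < r → ab.1 i + ab.2 (i + 1) = (m / p ^ (i + 1)) % p := by
  obtain ⟨ha0, hb0, hb1, hsum, heq⟩ := hab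
  have hclt : ∀ j, digitSeq ab j < p := by
    intro j
    match j with
    | 0 => have := hb1 0; simp only [digitSeq]; omega
    | (j+1) =>
      simp only [digitSeq]
      by_cases hjr : j < r
      · have hA : ab.1 j ≤ ∑ i ∈ Finset.range r, ab.1 i :=
          Finset.single_le_sum (fun i _ => Nat.zero_le _) (Finset.mem_range.mpr hjr)
        have hB1 := hb1 (j+1)
        by_cases hj1 : j + 1 < r
        · have hB : ab.2 (j+1) ≤ ∑ i ∈ Finset.range r, ab.2 i :=
            Finset.single_le_sum (fun i _ => Nat.zero_le _) (Finset.mem_range.mpr hj1)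
          omega
        · have hB : ab.2 (j+1) = 0 := hb0 _ (by omega)
          omega
      · have h1 : ab.1 j = 0 := ha0 _ (by omega)
        have h2 : ab.2 (j+1) = 0 := hb0 _ (by omega)
        omega
  have hm : ∑ j ∈ Finset.range (r + 1), digitSeq ab j * p ^ j = m := by
    rw [Finset.sum_range_succ']
    simp only [digitSeq, pow_zero, mul_one]
    omega
  have key : ∀ i, i < r + 1 → (m / p ^ i) % p = digitSeq ab i := by
    intro i hi
    rw [← hm]
    exact digit_of_sum p hp _ (r + 1) hclt i hi
  constructor
  · have := key 0 (by omega)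
    simp only [digitSeq, pow_zero, Nat.div_one] at this
    omega
  · intro i hi
    have := key (i + 1) (by omega)
    simp only [digitSeq] at this
    omega

lemma choose_le_fib : ∀ t j : ℕ, j ≤ t → 1 ≤ t + j → Nat.choose t j ≤ Nat.fib (t + j) := by
  intro t
  induction t with
  | zero => intro j hj h1; omega
  | succ t ih =>
    intro j hj h1
    match j with
    | 0 =>
      have hpos : 0 < Nat.fib (t + 1 + 0) := Nat.fib_pos.mpr (by omega)
      rw [Nat.choose_zero_right]
      exact hpos
    | (j+1) =>
      rw [Nat.choose_succ_succ]
      by_cases hjt : j + 1 ≤ t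
      · have h1' := ih j (by omega) (by omega)
        have h2' := ih (j+1) hjt (by omega)
        have hfib : Nat.fib (t + j) + Nat.fib (t + (j + 1)) = Nat.fib (t + 1 + (j + 1)) := by
          have e1 : t + 1 + (j + 1) = (t + j) + 2 := by omega
          have e2 : t + (j + 1) = t + j + 1 := by omega
          rw [e1, Nat.fib_add_two, e2]
        simp only [Nat.succ_eq_add_one] at *
        omega
      · have hjt' : j = t := by omega
        subst hjt'
        rw [Nat.choose_self, Nat.choose_succ_self]
        have := Nat.fib_pos.mpr (show 0 < j + 1 + (j + 1) by omega)
        omega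

/-- for an odd prime `p` and `1 ≤ n ≤ 2p - 2`, `N(m,n) ≤ F(n)`,
the `n`-th Fibonacci number (`F(1) = F(2) = 1`). -/
theorem stmt8 (p : ℕ) (hp : p.Prime) (hodd : Odd p) (n : ℕ) (hn1 : 1 ≤ n)
    (hn2 : n ≤ 2 * p - 2) (m : ℕ) :
    Nstab p (m : ℤ) (n : ℤ) ≤ Nat.fib n := by
  have hp2 : 2 ≤ p := hp.two_le
  have hstab : Nstab p (m : ℤ) (n : ℤ) = Ncard p (m + 1) m n := by
    simp [Nstab]
  rw [hstab]
  set r := m + 1 with hr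
  set d : ℕ → ℕ := fun i => (m / p ^ i) % p with hd
  set D : Finset ℕ := (Finset.Icc 1 r).filter (fun i => d i ≠ 0) with hD
  set S : ℕ := ∑ i ∈ Finset.Icc 1 r, d i with hS
  set k : ℕ := 2 * S + d 0 - n with hk
  set t : ℕ := D.card with ht
  have hIcc : ∀ f : ℕ → ℕ, ∑ i ∈ Finset.Icc 1 r, f i = ∑ j ∈ Finset.range r, f (j + 1) := by
    intro f
    rw [← Finset.Ico_add_one_right_eq_Icc, Finset.sum_Ico_eq_sum_range]
    have : r + 1 - 1 = r := by omega
    rw [this]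
    exact Finset.sum_congr rfl fun j _ => by rw [add_comm]
  -- the subset fact
  have keysub : ∀ ab ∈ SolSet p r m n,
      ((Finset.Icc 1 r).filter (fun i => ab.2 i = 1)) ⊆ D := by
    intro ab hab
    obtain ⟨-, hdig⟩ := sol_digits hp2 hn2 hab
    intro i hi
    rw [Finset.mem_filter, Finset.mem_Icc] at hi
    obtain ⟨⟨h1i, hir⟩, hbi⟩ := hi
    rw [hD, Finset.mem_filter, Finset.mem_Icc]
    refine ⟨⟨h1i, hir⟩, ?_⟩
    obtain ⟨j, rfl⟩ : ∃ j, i = j + 1 := ⟨i - 1, by omega⟩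
    have := hdig j (by omega)
    simp only [hd]
    omega
  -- the cardinality fact
  have key2 : ∀ ab ∈ SolSet p r m n,
      ((Finset.Icc 1 r).filter (fun i => ab.2 i = 1)).card + n = 2 * S + d 0 := by
    intro ab hab
    obtain ⟨hb0d, hdig⟩ := sol_digits hp2 hn2 hab
    obtain ⟨ha0, hb0, hb1, hsum, heq⟩ := hab
    have hc1 : ((Finset.Icc 1 r).filter (fun i => ab.2 i = 1)).card
        = ∑ i ∈ Finset.Icc 1 r, ab.2 i := by
      rw [Finset.card_filter]
      refine Finset.sum_congr rfl fun i _ => ?_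
      have := hb1 i
      split <;> omega
    have hb_eq : (∑ j ∈ Finset.range r, ab.2 (j + 1)) + ab.2 0
        = ∑ j ∈ Finset.range r, ab.2 j := by
      rw [← Finset.sum_range_succ', Finset.sum_range_succ, hb0 r le_rfl, add_zero]
    have hS_eq : S = (∑ j ∈ Finset.range r, ab.1 j) + ∑ j ∈ Finset.range r, ab.2 (j + 1) := by
      rw [hS, hIcc d, ← Finset.sum_add_distrib]
      refine Finset.sum_congr rfl fun j hj => ?_
      have := hdig j (Finset.mem_range.mp hj)
      simp only [hd]
      omega
    have hd0 : d 0 = ab.2 0 := by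
      simp only [hd, pow_zero, Nat.div_one]
      omega
    rw [hc1, hIcc ab.2]
    omega
  have key : ∀ ab ∈ SolSet p r m n,
      ((Finset.Icc 1 r).filter (fun i => ab.2 i = 1)) ∈ D.powersetCard k := by
    intro ab hab
    rw [Finset.mem_powersetCard]
    refine ⟨keysub ab hab, ?_⟩
    have := key2 ab hab
    omega
  -- injection
  have hinj : Nat.card (SolSet p r m n) ≤ (D.powersetCard k).card := by
    rw [← Nat.card_eq_finsetCard]
    apply Nat.card_le_card_of_injective
      (f := fun x : SolSet p r m n =>
        (⟨(Finset.Icc 1 r).filter (fun i => x.1.2 i = 1), key x.1 x.2⟩ :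
          {T // T ∈ D.powersetCard k}))
    intro x y hxy
    simp only [Subtype.mk.injEq] at hxy
    obtain ⟨hxb0, hxdig⟩ := sol_digits hp2 hn2 x.2
    obtain ⟨hyb0, hydig⟩ := sol_digits hp2 hn2 y.2
    obtain ⟨hxa0, hxb0', hxb1, -, -⟩ := x.2
    obtain ⟨hya0, hyb0', hyb1, -, -⟩ := y.2
    have hb : x.1.2 = y.1.2 := by
      funext i
      match i with
      | 0 => rw [hxb0, hyb0]
      | (j+1) =>
        by_cases hjr : j + 1 ≤ r
        · have e1 : ((j+1) ∈ (Finset.Icc 1 r).filter (fun i => x.1.2 i = 1))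
              ↔ x.1.2 (j+1) = 1 := by
            simp [Finset.mem_filter, Finset.mem_Icc, hjr]
          have e2 : ((j+1) ∈ (Finset.Icc 1 r).filter (fun i => y.1.2 i = 1))
              ↔ y.1.2 (j+1) = 1 := by
            simp [Finset.mem_filter, Finset.mem_Icc, hjr]
          rw [hxy] at e1
          have hiff : x.1.2 (j+1) = 1 ↔ y.1.2 (j+1) = 1 := e1.symm.trans e2
          have h1 := hxb1 (j+1)
          have h2 := hyb1 (j+1)
          by_cases h : x.1.2 (j+1) = 1
          · rw [h]; exact (hiff.mp h).symm
          · have h' : ¬ y.1.2 (j+1) = 1 := fun hy1 => h (hiff.mpr hy1)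
            omega
        · rw [hxb0' _ (by omega), hyb0' _ (by omega)]
    have ha : x.1.1 = y.1.1 := by
      funext i
      by_cases hir : i < r
      · have h1 := hxdig i hir
        have h2 := hydig i hir
        have h3 : x.1.2 (i+1) = y.1.2 (i+1) := by rw [hb]
        omega
      · rw [hxa0 _ (by omega), hya0 _ (by omega)]
    exact Subtype.ext (Prod.ext_iff.mpr ⟨ha, hb⟩)
  rcases Set.eq_empty_or_nonempty (SolSet p r m n) with he | ⟨x0, hx0⟩
  · unfold Ncard
    rw [he]
    simp
  · have hmem := Finset.mem_powersetCard.mp (key x0 hx0)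
    have hkt : k ≤ t := by
      rw [ht, ← hmem.2]
      exact Finset.card_le_card hmem.1
    have htS : t ≤ S := by
      calc t = ∑ _i ∈ D, 1 := by rw [ht, Finset.card_eq_sum_ones]
        _ ≤ ∑ i ∈ D, d i := by
            refine Finset.sum_le_sum fun i hi => ?_
            have := (Finset.mem_filter.mp hi).2
            omega
        _ ≤ ∑ i ∈ Finset.Icc 1 r, d i :=
            Finset.sum_le_sum_of_subset (Finset.filter_subset _ _)
        _ = S := hS.symm
    have hnk : n + k = 2 * S + d 0 := by
      have h1 := key2 x0 hx0
      have h2 := hmem.2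
      omega
    have hn' : 2 * t - k ≤ n := by omega
    calc Ncard p r m n ≤ (D.powersetCard k).card := hinj
      _ = t.choose k := by rw [Finset.card_powersetCard, ht]
      _ = t.choose (t - k) := (Nat.choose_symm hkt).symm
      _ ≤ Nat.fib n := by
          rcases Nat.eq_zero_or_pos (t + (t - k)) with h0 | h0
          · have ht0 : t = 0 := by omega
            have hk0 : t - k = 0 := by omega
            rw [hk0, Nat.choose_zero_right]
            have hpos : 0 < Nat.fib n := Nat.fib_pos.mpr (by omega)
            omega
          · have h1 := choose_le_fib t (t - k) (by omega) h0
            exact h1.trans (Nat.fib_mono (by omega))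
end

section
/- For every integer n ≥ 1, the number of compositions of n satisfies p_o(n) ≤ p(2n²) < e^{2πn/√3}, where p(N) denotes the number of partitions of the positive integer N. -/
open Finset Real

lemma part1 (n : ℕ) (hn : 1 ≤ n) :
    2 ^ (n - 1) ≤ Fintype.card (Nat.Partition (2 * n ^ 2)) := by
  obtain ⟨m, rfl⟩ : ∃ m, n = m + 1 := ⟨n-1, by omega⟩
  set n := m + 1 with hn'
  have hsum : ∀ S : Finset (Fin m),
      (S.1.map (fun i : Fin m => (i:ℕ)+1)).sum + n ≤ 2 * n ^ 2 := by
    intro S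
    have h1 : (S.1.map (fun i : Fin m => (i:ℕ)+1)).sum ≤ m * m := by
      calc (S.1.map (fun i : Fin m => (i:ℕ)+1)).sum
          ≤ (S.1.map (fun _ : Fin m => m)).sum := by
            apply Multiset.sum_map_le_sum_map
            intro i _
            have := i.isLt; omega
        _ = S.1.card * m := by simp [mul_comm]
        _ ≤ m * m := by
            gcongr
            simpa using S.card_le_univ.trans_eq (by simp)
    nlinarith [h1]
  have hlt : ∀ (S : Finset (Fin m)) (a : ℕ), a ∈ S.1.map (fun i : Fin m => (i:ℕ)+1) → a < n := by
    intro S a ha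
    simp only [Multiset.mem_map] at ha
    obtain ⟨i, _, rfl⟩ := ha
    have := i.isLt; omega
  set F : Finset (Fin m) → Nat.Partition (2 * n ^ 2) := fun S =>
    { parts := (2 * n ^ 2 - (S.1.map (fun i : Fin m => (i:ℕ)+1)).sum) ::ₘ
        S.1.map (fun i : Fin m => (i:ℕ)+1),
      parts_pos := by
        intro a ha
        rcases Multiset.mem_cons.1 ha with rfl | h
        · have := hsum S; omega
        · have := hlt S a h
          simp only [Multiset.mem_map] at h
          obtain ⟨i, _, rfl⟩ := h; omega
      parts_sum := by
        have := hsum S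
        simp only [Multiset.sum_cons]
        omega } with hF
  have hinj : Function.Injective F := by
    intro S T h
    have hparts := congrArg Nat.Partition.parts h
    simp only [hF] at hparts
    have hfil := congrArg (Multiset.filter (· < n)) hparts
    rw [Multiset.filter_cons_of_neg, Multiset.filter_cons_of_neg,
        Multiset.filter_eq_self.2 (hlt S), Multiset.filter_eq_self.2 (hlt T)] at hfil
    · have : S.1 = T.1 := by
        apply Multiset.map_injective (f := fun i : Fin m => (i:ℕ)+1) ?_ hfil
        intro a b hab
        have hab' : (a:ℕ) + 1 = (b:ℕ) + 1 := hab
        exact Fin.ext (by omega)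
      exact Finset.val_injective this
    · have := hsum T; omega
    · have := hsum S; omega
  calc (2:ℕ) ^ (n - 1) = Fintype.card (Finset (Fin m)) := by simp; omega
    _ ≤ Fintype.card (Nat.Partition (2 * n ^ 2)) := Fintype.card_le_of_injective F hinj


lemma geom_aux {y : ℝ} (hy0 : 0 < y) (hy1 : y < 1) (N : ℕ) :
    ∑ i ∈ Finset.range N, y ^ (i + 1) ≤ y / (1 - y) := by
  have h1 : ∑ i ∈ Finset.range N, y ^ (i + 1) = y * ((1 - y ^ N) / (1 - y)) := by
    simp_rw [pow_succ']
    rw [← Finset.mul_sum, geom_sum_eq (by linarith) N, ← neg_div_neg_eq]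
    ring_nf
  rw [h1, div_eq_mul_one_div y (1 - y)]
  apply mul_le_mul_of_nonneg_left _ hy0.le
  apply div_le_div_of_nonneg_right _ (by linarith)
  nlinarith [pow_pos hy0 N]

lemma one_sub_pow_ge {x : ℝ} (hx0 : 0 < x) (hx1 : x < 1) (m : ℕ) :
    (m + 1 : ℝ) * x ^ m * (1 - x) ≤ 1 - x ^ (m + 1) := by
  have h1 : (1 : ℝ) - x ^ (m + 1) = (1 - x) * ∑ j ∈ Finset.range (m + 1), x ^ j := by
    have := mul_geom_sum x (m + 1)
    linear_combination this
  have h2 : (m + 1 : ℝ) * x ^ m ≤ ∑ j ∈ Finset.range (m + 1), x ^ j := by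
    have : ∀ j ∈ Finset.range (m + 1), x ^ m ≤ x ^ j := by
      intro j hj
      exact pow_le_pow_of_le_one hx0.le hx1.le (by have := Finset.mem_range.1 hj; omega)
    calc (m + 1 : ℝ) * x ^ m = (Finset.range (m + 1)).card • x ^ m := by
          simp [nsmul_eq_mul]
      _ ≤ ∑ j ∈ Finset.range (m + 1), x ^ j := Finset.card_nsmul_le_sum _ _ _ this
  rw [h1]
  nlinarith [h2]

lemma partA (N : ℕ) (hN : 1 ≤ N) {x : ℝ} (hx0 : 0 < x) (hx1 : x < 1) :
    (Fintype.card (Nat.Partition N) : ℝ) * x ^ N <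
      ∏ i ∈ Finset.range N, (1 - x ^ (i + 1))⁻¹ := by classical
  have hmem : ∀ (p : Nat.Partition N) (a : ℕ), a ∈ p.parts → a ≤ N := by
    intro p a ha
    have h1 : p.parts.sum = a + (p.parts.erase a).sum := by
      conv_lhs => rw [← Multiset.cons_erase ha]
      simp
    have := p.parts_sum
    omega
  have hsub : ∀ p : Nat.Partition N, p.parts.toFinset ⊆ Finset.range (N + 1) := by
    intro p a ha
    simp only [Multiset.mem_toFinset] at ha
    exact Finset.mem_range.2 (Nat.lt_succ_of_le (hmem p a ha))
  have hcount : ∀ (p : Nat.Partition N) (a : ℕ), 1 ≤ a → p.parts.count a ≤ N := by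
    intro p a ha
    have hle : p.parts.count a • a ≤ p.parts.sum := by
      have h2 : p.parts.filter (· = a) ≤ p.parts := Multiset.filter_le _ _
      obtain ⟨u, hu⟩ := Multiset.le_iff_exists_add.1 h2
      have h3 : (p.parts.filter (· = a)).sum = p.parts.count a • a := by
        rw [Multiset.filter_eq', Multiset.sum_replicate]
      calc p.parts.count a • a = (p.parts.filter (· = a)).sum := h3.symm
        _ ≤ p.parts.sum := by
          conv_rhs => rw [hu]
          rw [Multiset.sum_add]; exact Nat.le_add_right _ _
    rw [p.parts_sum] at hle
    calc p.parts.count a = p.parts.count a * 1 := (mul_one _).symm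
      _ ≤ p.parts.count a * a := by exact Nat.mul_le_mul_left _ ha
      _ ≤ N := by simpa using hle
  have hGsum : ∀ p : Nat.Partition N, ∑ i : Fin N, ((i : ℕ) + 1) * p.parts.count ((i : ℕ) + 1) = N := by
    intro p
    have h1 : p.parts.sum = ∑ a ∈ Finset.range (N + 1), p.parts.count a • a :=
      Finset.sum_multiset_count_of_subset _ _ (hsub p)
    rw [Fin.sum_univ_eq_sum_range (fun i => (i + 1) * p.parts.count (i + 1))]
    have h2 : ∑ a ∈ Finset.range (N + 1), p.parts.count a • a
        = ∑ i ∈ Finset.range N, (i + 1) * p.parts.count (i + 1) := by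
      rw [Finset.sum_range_succ']
      simp [mul_comm]
    rw [← h2, ← h1, p.parts_sum]
  set G : Nat.Partition N → (Fin N → ℕ) := fun p i => p.parts.count ((i : ℕ) + 1) with hG
  have hGinj : Function.Injective G := by
    intro p q h
    have hcnt : ∀ a : ℕ, p.parts.count a = q.parts.count a := by
      intro a
      rcases Nat.eq_zero_or_pos a with rfl | ha
      · rw [Multiset.count_eq_zero_of_notMem, Multiset.count_eq_zero_of_notMem]
        · exact fun hc => (Nat.lt_irrefl 0 (q.parts_pos hc)).elim
        · exact fun hc => (Nat.lt_irrefl 0 (p.parts_pos hc)).elim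
      · rcases le_or_gt a N with haN | haN
        · have : a - 1 < N := by omega
          have := congrFun h ⟨a - 1, this⟩
          simpa [hG, Nat.sub_add_cancel ha] using this
        · rw [Multiset.count_eq_zero_of_notMem, Multiset.count_eq_zero_of_notMem]
          · exact fun hc => absurd (hmem q a hc) (by omega)
          · exact fun hc => absurd (hmem p a hc) (by omega)
    cases p; cases q
    simp only [Nat.Partition.mk.injEq]
    exact Multiset.ext.2 hcnt
  have key : (Fintype.card (Nat.Partition N) : ℝ) * x ^ N ≤
      ∏ i : Fin N, ∑ j ∈ Finset.range (N + 1), x ^ (((i : ℕ) + 1) * j) := by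
    rw [Finset.prod_univ_sum]
    have hval : ∀ p : Nat.Partition N,
        ∏ i : Fin N, x ^ (((i : ℕ) + 1) * G p i) = x ^ N := by
      intro p
      rw [Finset.prod_pow_eq_pow_sum]
      rw [hGsum p]
    calc (Fintype.card (Nat.Partition N) : ℝ) * x ^ N
        = ∑ _p : Nat.Partition N, x ^ N := by
          rw [Finset.sum_const, Finset.card_univ, nsmul_eq_mul]
      _ = ∑ p : Nat.Partition N, ∏ i : Fin N, x ^ (((i : ℕ) + 1) * G p i) := by
          exact Finset.sum_congr rfl fun p _ => (hval p).symm
      _ = ∑ g ∈ Finset.univ.image G, ∏ i : Fin N, x ^ (((i : ℕ) + 1) * g i) := by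
          rw [Finset.sum_image (fun p _ q _ h => hGinj h)]
      _ ≤ ∑ g ∈ Fintype.piFinset (fun _ : Fin N => Finset.range (N + 1)),
            ∏ i : Fin N, x ^ (((i : ℕ) + 1) * g i) := by
          apply Finset.sum_le_sum_of_subset_of_nonneg
          · intro g hg
            simp only [Finset.mem_image] at hg
            obtain ⟨p, _, rfl⟩ := hg
            rw [Fintype.mem_piFinset]
            intro i
            exact Finset.mem_range.2 (Nat.lt_succ_of_le (hcount p _ (Nat.le_add_left 1 _)))
          · intro g _ _
            positivity
  refine lt_of_le_of_lt key ?_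
  rw [Fin.prod_univ_eq_prod_range (fun i => ∑ j ∈ Finset.range (N + 1), x ^ ((i + 1) * j))]
  apply Finset.prod_lt_prod_of_nonempty
  · intro i _
    apply Finset.sum_pos'
    · intro j _; positivity
    · exact ⟨0, Finset.mem_range.2 (by omega), by simp⟩
  · intro i _
    have hy0 : (0:ℝ) < x ^ (i + 1) := by positivity
    have hy1 : x ^ (i + 1) < 1 := pow_lt_one₀ hx0.le hx1 (by omega)
    have hgeo : ∑ j ∈ Finset.range (N + 1), x ^ ((i + 1) * j)
        = (1 - (x ^ (i + 1)) ^ (N + 1)) / (1 - x ^ (i + 1)) := by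
      have : ∀ j, x ^ ((i + 1) * j) = (x ^ (i + 1)) ^ j := fun j => by rw [← pow_mul]
      simp_rw [this]
      rw [geom_sum_eq (by linarith) (N + 1)]
      rw [← neg_div_neg_eq]
      ring_nf
    rw [hgeo, inv_eq_one_div]
    apply (div_lt_div_iff_of_pos_right (by linarith)).2
    nlinarith [pow_pos hy0 (N + 1)]
  · exact ⟨0, Finset.mem_range.2 (by omega)⟩

lemma partB (N : ℕ) {x : ℝ} (hx0 : 0 < x) (hx1 : x < 1) :
    ∏ i ∈ Finset.range N, (1 - x ^ (i + 1))⁻¹ ≤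
      Real.exp (π ^ 2 / 6 * (x / (1 - x))) := by
  have h1x : (0:ℝ) < 1 - x := by linarith
  have hxk1 : ∀ k : ℕ, x ^ (k + 1) < 1 := fun k => pow_lt_one₀ hx0.le hx1 (Nat.succ_ne_zero k)
  have hxk0 : ∀ k : ℕ, (0:ℝ) < x ^ (k + 1) := fun k => pow_pos hx0 _
  have hlog : ∀ i : ℕ, HasSum (fun m : ℕ => (x ^ (i+1)) ^ (m + 1) / (m + 1))
      (-Real.log (1 - x ^ (i + 1))) := fun i =>
    hasSum_pow_div_log_of_abs_lt_one (by rw [abs_of_pos (hxk0 i)]; exact hxk1 i)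
  have hg : HasSum (fun m : ℕ => ∑ i ∈ Finset.range N, (x ^ (i+1)) ^ (m + 1) / (m + 1))
      (∑ i ∈ Finset.range N, -Real.log (1 - x ^ (i + 1))) :=
    hasSum_sum fun i _ => hlog i
  have hh : HasSum (fun m : ℕ => x / (1 - x) * ((1:ℝ) / ((m:ℝ) + 1) ^ 2))
      (x / (1 - x) * (π ^ 2 / 6)) := by
    have h0 : HasSum (fun m : ℕ => (1:ℝ) / ((m:ℝ) + 1) ^ 2) (π ^ 2 / 6) := by
      have h := (hasSum_nat_add_iff' (f := fun n : ℕ => (1:ℝ) / (n:ℝ) ^ 2) 1).2 hasSum_zeta_two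
      simpa using h
    exact h0.mul_left _
  have hle : ∀ m : ℕ, (∑ i ∈ Finset.range N, (x ^ (i+1)) ^ (m + 1) / (m + 1))
      ≤ x / (1 - x) * ((1:ℝ) / ((m:ℝ) + 1) ^ 2) := by
    intro m
    have e1 : ∑ i ∈ Finset.range N, (x ^ (i+1)) ^ (m + 1) / ((m:ℝ) + 1)
        = (∑ i ∈ Finset.range N, (x ^ (m+1)) ^ (i + 1)) / ((m:ℝ) + 1) := by
      rw [Finset.sum_div]
      refine Finset.sum_congr rfl fun i _ => ?_
      rw [← pow_mul, ← pow_mul, mul_comm]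
    have hm1 : (0:ℝ) < (m:ℝ) + 1 := by positivity
    rw [e1]
    have h2 : (∑ i ∈ Finset.range N, (x ^ (m+1)) ^ (i + 1)) ≤ x ^ (m+1) / (1 - x ^ (m+1)) :=
      geom_aux (hxk0 m) (hxk1 m) N
    have hbpos : (0:ℝ) < ((m:ℝ) + 1) * x ^ m * (1 - x) := by positivity
    have h3 : x ^ (m+1) / (1 - x ^ (m+1)) ≤ x / (((m:ℝ) + 1) * (1 - x)) := by
      calc x ^ (m+1) / (1 - x ^ (m+1)) ≤ x ^ (m+1) / (((m:ℝ) + 1) * x ^ m * (1 - x)) :=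
            div_le_div_of_nonneg_left (by positivity) hbpos (one_sub_pow_ge hx0 hx1 m)
        _ = x / (((m:ℝ) + 1) * (1 - x)) := by
            rw [pow_succ]
            rw [div_eq_div_iff (by positivity) (by positivity)]
            ring
    have e2 : x / (1 - x) * ((1:ℝ) / ((m:ℝ) + 1) ^ 2) = (x / (((m:ℝ) + 1) * (1 - x))) / ((m:ℝ) + 1) := by
      field_simp
      try ring
      try tauto
    rw [e2]
    gcongr
    exact h2.trans h3
  have hsum_le : (∑ i ∈ Finset.range N, -Real.log (1 - x ^ (i + 1)))
      ≤ x / (1 - x) * (π ^ 2 / 6) := hasSum_le hle hg hh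
  have hprod : ∏ i ∈ Finset.range N, (1 - x ^ (i + 1))⁻¹
      = Real.exp (∑ i ∈ Finset.range N, -Real.log (1 - x ^ (i + 1))) := by
    rw [Real.exp_sum]
    refine Finset.prod_congr rfl fun i _ => ?_
    rw [← Real.log_inv, Real.exp_log (inv_pos.2 (by linarith [hxk1 i]))]
  rw [hprod]
  apply Real.exp_le_exp.2
  rw [mul_comm (π ^ 2 / 6)]
  exact hsum_le

/-- the number of compositions of `n ≥ 1` satisfies
`p_o(n) ≤ p(2n²) < e^{2πn/√3}`, where `p(N)` is the number of partitions of `N`. -/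
theorem stmt10 (n : ℕ) (hn : 1 ≤ n) :
    Fintype.card (Composition n) ≤ Fintype.card (Nat.Partition (2 * n ^ 2)) ∧
    (Fintype.card (Nat.Partition (2 * n ^ 2)) : ℝ) <
      Real.exp (2 * Real.pi * n / Real.sqrt 3) := by
  constructor
  · rw [composition_card]
    exact part1 n hn
  · set N := 2 * n ^ 2 with hN
    have hN1 : 1 ≤ N := by
      have : 1 ≤ n ^ 2 := Nat.one_le_pow _ _ hn
      omega
    have hs3 : (0:ℝ) < Real.sqrt 3 := Real.sqrt_pos.2 (by norm_num)
    have hs3sq : Real.sqrt 3 ^ 2 = 3 := Real.sq_sqrt (by norm_num)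
    have hnR : (1:ℝ) ≤ (n:ℝ) := by exact_mod_cast hn
    have hnpos : (0:ℝ) < (n:ℝ) := by linarith
    set t : ℝ := π / (2 * Real.sqrt 3 * n) with ht
    have ht0 : 0 < t := div_pos Real.pi_pos (by positivity)
    set x : ℝ := 1 / (1 + t) with hx
    have hx0 : 0 < x := by positivity
    have hx1 : x < 1 := by
      rw [hx, div_lt_one (by linarith)]; linarith
    have hxfrac : x / (1 - x) = 1 / t := by
      rw [hx]
      field_simp
      rw [add_sub_cancel_left, div_self ht0.ne']
    have hA := partA N hN1 hx0 hx1
    have hB := partB N hx0 hx1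
    have h1 : (Fintype.card (Nat.Partition N) : ℝ) * x ^ N <
        Real.exp (π ^ 2 / 6 * (1 / t)) := by
      rw [← hxfrac]; exact hA.trans_le hB
    have hxN : x ^ N = ((1 + t) ^ N)⁻¹ := by rw [hx, one_div, inv_pow]
    have hcard : (Fintype.card (Nat.Partition N) : ℝ) <
        Real.exp (π ^ 2 / 6 * (1 / t)) * (1 + t) ^ N := by
      have h2 : (0:ℝ) < (1 + t) ^ N := by positivity
      calc (Fintype.card (Nat.Partition N) : ℝ)
          = (Fintype.card (Nat.Partition N) : ℝ) * x ^ N * (1 + t) ^ N := by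
            rw [hxN]; field_simp
        _ < _ := mul_lt_mul_of_pos_right h1 h2
    refine hcard.trans_le ?_
    have hexp : (1 + t) ^ N ≤ Real.exp ((N:ℝ) * t) := by
      calc (1 + t) ^ N ≤ Real.exp t ^ N := by
            have h := pow_le_pow_left₀ (by linarith : (0:ℝ) ≤ t + 1) (Real.add_one_le_exp t) N
            simpa [add_comm] using h
        _ = Real.exp ((N:ℝ) * t) := by rw [← Real.exp_nat_mul]
    have heq : π ^ 2 / 6 * (1 / t) + (N:ℝ) * t = 2 * π * n / Real.sqrt 3 := by
      have hNR : (N:ℝ) = 2 * (n:ℝ) ^ 2 := by rw [hN]; push_cast; ring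
      rw [hNR, ht]
      have hpi := Real.pi_pos
      field_simp
      ring_nf
      linear_combination 2 * hs3sq
    calc Real.exp (π ^ 2 / 6 * (1 / t)) * (1 + t) ^ N
        ≤ Real.exp (π ^ 2 / 6 * (1 / t)) * Real.exp ((N:ℝ) * t) := by
          exact mul_le_mul_of_nonneg_left hexp (Real.exp_pos _).le
      _ = Real.exp (π ^ 2 / 6 * (1 / t) + (N:ℝ) * t) := (Real.exp_add _ _).symm
      _ = Real.exp (2 * π * n / Real.sqrt 3) := by rw [heq]
end

section
/- Let p be a prime, n ≥ 1 an integer, and let c = (c_1, …, c_r) be a composition of n. Then for every positive integer m, the number of tuples (s_1, …, s_r) of nonnegative integers with s_1 < s_2 < ⋯ < s_r and m = Σ_{i=1}^r c_i p^{s_i} is at most 2^n. -/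
open Finset

section DigitSum

variable (p : ℕ)

/-- base-p digit sum -/
def sd (x : ℕ) : ℕ := (Nat.digits p x).sum

lemma sd_zero : sd p 0 = 0 := by simp [sd]

lemma sd_rec (hp : 2 ≤ p) {x : ℕ} (hx : x ≠ 0) : sd p x = x % p + sd p (x / p) := by
  unfold sd
  rw [Nat.digits_def' (by omega : 1 < p) (Nat.pos_of_ne_zero hx)]
  simp

lemma sd_le (x : ℕ) : sd p x ≤ x := Nat.digit_sum_le p x

lemma sd_one (hp : 2 ≤ p) : sd p 1 = 1 := by
  rw [sd_rec p hp one_ne_zero, Nat.mod_eq_of_lt (by omega), Nat.div_eq_of_lt (by omega), sd_zero]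

lemma sd_pos (hp : 2 ≤ p) {x : ℕ} (hx : x ≠ 0) : 1 ≤ sd p x := by
  rw [sd_rec p hp hx]
  rcases Nat.eq_zero_or_pos (x % p) with h | h
  · have hq0 : x / p ≠ 0 := by
      intro h0
      have hq := Nat.div_add_mod x p
      rw [h0, h] at hq
      simp at hq
      exact hx hq.symm
    have := sd_pos hp hq0
    omega
  · omega
decreasing_by exact Nat.div_lt_self (Nat.pos_of_ne_zero hx) (by omega)

lemma sd_p_mul (hp : 2 ≤ p) (x : ℕ) : sd p (p * x) = sd p x := by
  rcases Nat.eq_zero_or_pos x with rfl | hx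
  · simp [sd]
  · rw [sd_rec p hp (by positivity)]
    rw [Nat.mul_mod_right, Nat.mul_div_cancel_left _ (by omega : 0 < p)]
    simp

lemma sd_pow_mul (hp : 2 ≤ p) (i x : ℕ) : sd p (p ^ i * x) = sd p x := by
  induction i with
  | zero => simp
  | succ i ih => rw [pow_succ, mul_comm (p^i) p, mul_assoc, sd_p_mul p hp, ih]

lemma sd_succ_le (hp : 2 ≤ p) (x : ℕ) : sd p (x + 1) ≤ sd p x + 1 := by
  induction x using Nat.strong_induction_on with | _ x IH =>
  rcases Nat.eq_zero_or_pos x with rfl | hx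
  · rw [sd_one p hp, sd_zero]
  have hq : p * (x / p) + x % p = x := Nat.div_add_mod x p
  have hrp : x % p < p := Nat.mod_lt _ (by omega)
  rcases Nat.lt_or_ge (x % p + 1) p with h | h
  · have e0 : x + 1 = p * (x / p) + (x % p + 1) := by omega
    have e1 : (x + 1) % p = x % p + 1 := by
      rw [e0, Nat.mul_add_mod, Nat.mod_eq_of_lt h]
    have e2 : (x + 1) / p = x / p := by
      rw [e0, Nat.mul_add_div (by omega : 0 < p), Nat.div_eq_of_lt h]
      omega
    rw [sd_rec p hp (by omega), e1, e2, sd_rec p hp (by omega : x ≠ 0)]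
    omega
  · have hr : x % p = p - 1 := by omega
    have e0 : x + 1 = p * (x / p + 1) := by
      rw [Nat.mul_succ]; omega
    have e1 : (x + 1) % p = 0 := by rw [e0]; exact Nat.mul_mod_right _ _
    have e2 : (x + 1) / p = x / p + 1 := by
      rw [e0]; exact Nat.mul_div_cancel_left _ (by omega : 0 < p)
    have hdiv_lt : x / p < x := Nat.div_lt_self (by omega) (by omega)
    have := IH (x / p) hdiv_lt
    rw [sd_rec p hp (by omega), e1, e2, sd_rec p hp (by omega : x ≠ 0)]
    omega

lemma sd_add_le (hp : 2 ≤ p) (x y : ℕ) : sd p (x + y) ≤ sd p x + sd p y := by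
  suffices key : ∀ n x y, x + y = n → sd p (x + y) ≤ sd p x + sd p y by
    exact key _ x y rfl
  clear x y
  intro n
  induction n using Nat.strong_induction_on with | _ n IH =>
  intro x y hn
  subst hn
  rcases Nat.eq_zero_or_pos x with rfl | hx
  · simp
  rcases Nat.eq_zero_or_pos y with rfl | hy
  · simp
  have hqx : p * (x / p) + x % p = x := Nat.div_add_mod x p
  have hqy : p * (y / p) + y % p = y := Nat.div_add_mod y p
  have hrx : x % p < p := Nat.mod_lt _ (by omega)
  have hry : y % p < p := Nat.mod_lt _ (by omega)
  have hxpl : x / p < x := Nat.div_lt_self (by omega) (by omega)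
  have hypl : y / p < y := Nat.div_lt_self (by omega) (by omega)
  rcases Nat.lt_or_ge (x % p + y % p) p with h | h
  · have e0 : x + y = p * (x / p + y / p) + (x % p + y % p) := by
      rw [Nat.mul_add]; omega
    have e1 : (x + y) % p = x % p + y % p := by
      rw [e0, Nat.mul_add_mod, Nat.mod_eq_of_lt h]
    have e2 : (x + y) / p = x / p + y / p := by
      rw [e0, Nat.mul_add_div (by omega : 0 < p), Nat.div_eq_of_lt h]
      omega
    have hIH := IH (x / p + y / p) (by omega) (x / p) (y / p) rfl
    rw [sd_rec p hp (by omega : x + y ≠ 0), e1, e2,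
        sd_rec p hp (by omega : x ≠ 0), sd_rec p hp (by omega : y ≠ 0)]
    omega
  · have e0 : x + y = p * (x / p + y / p + 1) + (x % p + y % p - p) := by
      rw [Nat.mul_add, Nat.mul_add]; omega
    have e1 : (x + y) % p = x % p + y % p - p := by
      rw [e0, Nat.mul_add_mod, Nat.mod_eq_of_lt (by omega)]
    have e2 : (x + y) / p = x / p + y / p + 1 := by
      rw [e0, Nat.mul_add_div (by omega : 0 < p),
        Nat.div_eq_of_lt (show x % p + y % p - p < p by omega)]
    have hIH := IH (x / p + y / p) (by omega) (x / p) (y / p) rfl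
    have hsucc := sd_succ_le p hp (x / p + y / p)
    rw [sd_rec p hp (by omega : x + y ≠ 0), e1, e2,
        sd_rec p hp (by omega : x ≠ 0), sd_rec p hp (by omega : y ≠ 0)]
    omega

lemma sd_pow_mul_add (hp : 2 ≤ p) (D a r : ℕ) (hr : r < p ^ D) :
    sd p (p ^ D * a + r) = sd p a + sd p r := by
  induction D generalizing r with
  | zero =>
    simp at hr
    subst hr
    simp [sd]
  | succ D IH =>
    rcases Nat.eq_zero_or_pos a with rfl | ha
    · simp [sd]
    have hq : p * (r / p) + r % p = r := Nat.div_add_mod r p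
    have e0 : p ^ (D+1) * a + r = p * (p ^ D * a + r / p) + r % p := by
      rw [pow_succ, Nat.mul_add, mul_comm (p^D) p, mul_assoc]
      omega
    have hrp : r % p < p := Nat.mod_lt _ (by omega)
    have e1 : (p ^ (D+1) * a + r) % p = r % p := by
      rw [e0, Nat.mul_add_mod, Nat.mod_eq_of_lt hrp]
    have e2 : (p ^ (D+1) * a + r) / p = p ^ D * a + r / p := by
      rw [e0, Nat.mul_add_div (by omega : 0 < p), Nat.div_eq_of_lt hrp]
      omega
    have hrdiv : r / p < p ^ D := by
      rw [Nat.div_lt_iff_lt_mul (by omega : 0 < p), ← pow_succ]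
      exact hr
    have hne : p ^ (D+1) * a + r ≠ 0 := by
      have : 1 ≤ p ^ (D+1) := Nat.one_le_pow _ _ (by omega)
      positivity
    rw [sd_rec p hp hne, e1, e2, IH (r / p) hrdiv]
    rcases Nat.eq_zero_or_pos r with rfl | hrpos
    · simp
    · rw [sd_rec p hp (by omega : r ≠ 0)]
      omega

lemma sd_pow_sub_one (hp : 2 ≤ p) (i : ℕ) : sd p (p ^ i - 1) = i * (p - 1) := by
  induction i with
  | zero => simp [sd]
  | succ i IH =>
    have h1 : 1 ≤ p ^ i := Nat.one_le_pow _ _ (by omega)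
    have h2 : 1 ≤ p ^ (i+1) := Nat.one_le_pow _ _ (by omega)
    have e : p * (p ^ i - 1 + 1) = p * (p ^ i - 1) + p := Nat.mul_succ p _
    have e' : p ^ i - 1 + 1 = p ^ i := by omega
    have epow : p ^ (i+1) = p * p ^ i := by rw [pow_succ, mul_comm]
    have e0 : p ^ (i+1) - 1 = p * (p ^ i - 1) + (p - 1) := by
      rw [e'] at e
      omega
    have e1 : (p ^ (i+1) - 1) % p = p - 1 := by
      rw [e0, Nat.mul_add_mod, Nat.mod_eq_of_lt (by omega)]
    have e2 : (p ^ (i+1) - 1) / p = p ^ i - 1 := by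
      rw [e0, Nat.mul_add_div (by omega : 0 < p),
        Nat.div_eq_of_lt (show p - 1 < p by omega)]
      omega
    rw [sd_rec p hp (by omega : p ^ (i+1) - 1 ≠ 0), e1, e2, IH]
    ring

lemma sd_pred (hp : 2 ≤ p) {u : ℕ} (hu : ¬ p ∣ u) : sd p (u - 1) + 1 = sd p u := by
  have hu0 : u ≠ 0 := by rintro rfl; exact hu (dvd_zero p)
  have hr1 : 1 ≤ u % p := by
    rcases Nat.eq_zero_or_pos (u % p) with h | h
    · exact absurd (Nat.dvd_of_mod_eq_zero h) hu
    · exact h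
  have hq : p * (u / p) + u % p = u := Nat.div_add_mod u p
  have hrp : u % p < p := Nat.mod_lt _ (by omega)
  rcases Nat.eq_zero_or_pos (u - 1) with h | h
  · have : u = 1 := by omega
    subst this
    rw [h, sd_zero, sd_one p hp]
  · have e0 : u - 1 = p * (u / p) + (u % p - 1) := by omega
    have e1 : (u - 1) % p = u % p - 1 := by
      rw [e0, Nat.mul_add_mod, Nat.mod_eq_of_lt (show u % p - 1 < p by omega)]
    have e2 : (u - 1) / p = u / p := by
      rw [e0, Nat.mul_add_div (by omega : 0 < p),
        Nat.div_eq_of_lt (show u % p - 1 < p by omega)]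
      omega
    rw [sd_rec p hp (by omega : u - 1 ≠ 0), e1, e2, sd_rec p hp hu0]
    omega

end DigitSum


variable (p : ℕ)

section Reps

/-- the set of representations -/
def RS (c : List ℕ) (m : ℕ) : Type :=
  {s : Fin c.length → ℕ // StrictMono s ∧ m = ∑ i : Fin c.length, c.get i * p ^ (s i)}

lemma RS_val_lt (hp : 2 ≤ p) {c : List ℕ} (hc : ∀ x ∈ c, 0 < x) {m : ℕ}
    (a : RS p c m) (i : Fin c.length) : a.1 i < m + 1 := by
  obtain ⟨s, hmono, heq⟩ := a
  show s i < m + 1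
  have hterm : c.get i * p ^ (s i) ≤ m := by
    rw [heq]
    exact Finset.single_le_sum (f := fun j => c.get j * p ^ (s j))
      (fun j _ => Nat.zero_le _) (mem_univ i)
  have hci : 1 ≤ c.get i := hc _ (List.get_mem c i)
  have h2 : p ^ (s i) ≤ m := le_trans (Nat.le_mul_of_pos_left _ hci) hterm
  have h3 : s i < p ^ (s i) := Nat.lt_pow_self (by omega : 1 < p)
  omega

lemma finite_RS (hp : 2 ≤ p) {c : List ℕ} (hc : ∀ x ∈ c, 0 < x) (m : ℕ) :
    Finite (RS p c m) := by
  apply Finite.of_injective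
    (fun (a : RS p c m) (i : Fin c.length) => (⟨a.1 i, RS_val_lt p hp hc a i⟩ : Fin (m+1)))
  intro a b hab
  apply Subtype.ext
  funext i
  have := congrFun hab i
  simpa using this

lemma one_le_of_RS (hp : 2 ≤ p) {c : List ℕ} (hc : ∀ x ∈ c, 0 < x) (hne : c ≠ []) {X : ℕ}
    (a : RS p c X) : 1 ≤ X := by
  obtain ⟨s, hmono, heq⟩ := a
  have hl : 0 < c.length := List.length_pos_iff.mpr hne
  set i0 : Fin c.length := ⟨0, hl⟩
  have hterm : c.get i0 * p ^ (s i0) ≤ X := by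
    rw [heq]
    exact Finset.single_le_sum (f := fun j => c.get j * p ^ (s j))
      (fun j _ => Nat.zero_le _) (mem_univ i0)
  have hci : 1 ≤ c.get i0 := hc _ (List.get_mem c i0)
  have hpw : 0 < p ^ (s i0) := Nat.pow_pos (show 0 < p by omega)
  exact le_trans (Nat.mul_pos hci hpw) hterm

lemma card_RS_single_le (hp : 2 ≤ p) (a m : ℕ) (ha : 0 < a) :
    Nat.card (RS p [a] m) ≤ 1 := by
  haveI : Subsingleton (RS p [a] m) := by
    constructor
    rintro ⟨s, hs, hseq⟩ ⟨t, ht, hteq⟩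
    have hseq' : m = ∑ i : Fin 1, [a].get i * p ^ s i := hseq
    have hteq' : m = ∑ i : Fin 1, [a].get i * p ^ t i := hteq
    rw [Fin.sum_univ_one] at hseq' hteq'
    set z : Fin ([a].length) := ⟨0, by simp⟩ with hz
    have e1 : m = a * p ^ (s z) := hseq'
    have e2 : m = a * p ^ (t z) := hteq'
    have hpow : p ^ (s z) = p ^ (t z) :=
      Nat.eq_of_mul_eq_mul_left ha (e1.symm.trans e2)
    have hst : s z = t z := Nat.pow_right_injective hp hpow
    apply Subtype.ext
    funext i
    have hi : i = z := by
      apply Fin.ext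
      have : i.1 < 1 := i.2
      simpa using this
    rw [hi]
    exact hst
  calc Nat.card (RS p [a] m) ≤ Nat.card Unit := by
        apply Nat.card_le_card_of_injective (fun _ => Unit.unit)
        intro x y _
        exact Subsingleton.elim x y
    _ = 1 := Nat.card_unique

lemma RS_single_exists (hp : 2 ≤ p) (a m : ℕ) (x : RS p [a] m) : ∃ t, m = a * p ^ t := by
  obtain ⟨s, hs, hseq⟩ := x
  have hseq' : m = ∑ i : Fin 1, [a].get i * p ^ s i := hseq
  rw [Fin.sum_univ_one] at hseq'
  exact ⟨s ⟨0, by simp⟩, hseq'⟩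

end Reps

section Decomp

lemma key1 (hp : 2 ≤ p) {c1 : ℕ} {c' : List ℕ} {m : ℕ}
    (s : Fin (c1 :: c').length → ℕ) (hmono : StrictMono s)
    (heq : m = ∑ i : Fin (c1 :: c').length, (c1 :: c').get i * p ^ s i) :
    m = c1 * p ^ (s ⟨0, by simp⟩) +
      p ^ (s ⟨0, by simp⟩ + 1) *
        (∑ i : Fin c'.length, c'.get i * p ^ (s (Fin.succ i) - (s ⟨0, by simp⟩ + 1))) := by
  set z : Fin (c1 :: c').length := ⟨0, by simp⟩ with hz
  have heq' : m = ∑ i : Fin (c'.length + 1), (c1 :: c').get i * p ^ s i := heq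
  rw [Fin.sum_univ_succ] at heq'
  simp only [List.get_eq_getElem, Fin.val_succ, List.getElem_cons_succ, Fin.val_zero,
    List.getElem_cons_zero] at heq' ⊢
  have hterm : ∀ i : Fin c'.length,
      p ^ (s (Fin.succ i)) = p ^ (s z + 1) * p ^ (s (Fin.succ i) - (s z + 1)) := by
    intro i
    rw [← pow_add]
    congr 1
    have h0 : s z < s (Fin.succ i) := by
      apply hmono
      simp [Fin.lt_def, hz]
    omega
  calc m = c1 * p ^ s z + ∑ i : Fin c'.length, c'[(i:ℕ)] * p ^ s (Fin.succ i) := heq'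
    _ = c1 * p ^ s z + ∑ i : Fin c'.length,
          p ^ (s z + 1) * (c'[(i:ℕ)] * p ^ (s (Fin.succ i) - (s z + 1))) := by
        congr 1
        apply Finset.sum_congr rfl
        intro i _
        rw [hterm i]
        ring
    _ = c1 * p ^ s z + p ^ (s z + 1) *
          ∑ i : Fin c'.length, c'[(i:ℕ)] * p ^ (s (Fin.succ i) - (s z + 1)) := by
        rw [Finset.mul_sum]

lemma card_RS_cons (hpp : p.Prime) {c1 : ℕ} {c' : List ℕ} (hc' : ∀ x ∈ c', 0 < x)
    {m : ℕ} (hm : m ≠ 0) :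
    Nat.card (RS p (c1 :: c') m) ≤
      ∑ k ∈ range (m.factorization p + 1),
        Nat.card (RS p c' (if c1 * p ^ k ≤ m ∧ p ^ (k+1) ∣ (m - c1 * p ^ k)
          then (m - c1 * p ^ k) / p ^ (k+1) else 0)) := by
  have hp : 2 ≤ p := hpp.two_le
  set v := m.factorization p with hv
  set μ : ℕ → ℕ := fun k => if c1 * p ^ k ≤ m ∧ p ^ (k+1) ∣ (m - c1 * p ^ k)
      then (m - c1 * p ^ k) / p ^ (k+1) else 0 with hμ
  set z : Fin (c1 :: c').length := ⟨0, by simp⟩ with hz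
  -- facts about any element
  have hzlt' : ∀ i : Fin c'.length, z < Fin.succ i := by
    intro i
    rw [Fin.lt_def]
    exact Nat.succ_pos i.1
  have hfacts : ∀ a : RS p (c1 :: c') m,
      (a.1 z < v + 1) ∧
      (μ (a.1 z) = ∑ i : Fin c'.length, c'.get i * p ^ (a.1 (Fin.succ i) - (a.1 z + 1))) := by
    intro a
    have hkey := key1 p hp a.1 a.2.1 a.2.2
    set X := ∑ i : Fin c'.length, c'.get i * p ^ (a.1 (Fin.succ i) - (a.1 z + 1)) with hX
    set k := a.1 z with hk
    have hpowpos : 0 < p ^ (k+1) := Nat.pow_pos (by omega)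
    have hle : c1 * p ^ k ≤ m := by omega
    have hsub : m - c1 * p ^ k = p ^ (k+1) * X := by omega
    have hdvd : p ^ (k+1) ∣ (m - c1 * p ^ k) := ⟨X, hsub⟩
    constructor
    · have hdvd' : p ^ k ∣ m := by
        refine ⟨c1 + p * X, ?_⟩
        rw [hkey, pow_succ]
        ring
      have := (Nat.Prime.pow_dvd_iff_le_factorization hpp hm).mp hdvd'
      omega
    · rw [hμ]
      simp only
      rw [if_pos ⟨hle, hdvd⟩, hsub, Nat.mul_div_cancel_left _ hpowpos]
  have hmono' : ∀ (a : RS p (c1 :: c') m) (i j : Fin c'.length), i < j →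
      a.1 (Fin.succ i) - (a.1 z + 1) < a.1 (Fin.succ j) - (a.1 z + 1) := by
    intro a i j hij
    have h1 : a.1 (Fin.succ i) < a.1 (Fin.succ j) := by
      apply a.2.1
      rw [Fin.lt_def]
      simpa [Fin.val_succ] using hij
    have h2 : a.1 z < a.1 (Fin.succ i) := a.2.1 (hzlt' i)
    omega
  have hzlt : ∀ (a : RS p (c1 :: c') m) (i : Fin c'.length), a.1 z < a.1 (Fin.succ i) := by
    intro a i
    exact a.2.1 (hzlt' i)
  -- the injection
  set f : RS p (c1 :: c') m → (Σ k : Fin (v+1), RS p c' (μ (k : ℕ))) :=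
    fun a => ⟨⟨a.1 z, (hfacts a).1⟩,
      ⟨fun i => a.1 (Fin.succ i) - (a.1 z + 1),
       fun i j hij => hmono' a i j hij,
       (hfacts a).2⟩⟩ with hf
  have hinj : Function.Injective f := by
    intro a b hab
    have h1 : a.1 z = b.1 z := by
      have := congrArg (fun x => (x.1 : ℕ)) hab
      simpa [hf] using this
    have h2 : ∀ j : Fin c'.length,
        a.1 (Fin.succ j) - (a.1 z + 1) = b.1 (Fin.succ j) - (b.1 z + 1) := by
      intro j
      have := congrFun (congrArg (fun x => x.2.1) hab) j
      simpa [hf] using this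
    apply Subtype.ext
    funext i
    refine Fin.cases ?_ ?_ i
    · exact h1
    · intro j
      have := h2 j
      have ha := hzlt a j
      have hb := hzlt b j
      show a.1 (Fin.succ j) = b.1 (Fin.succ j)
      omega
  haveI hfin : ∀ k : Fin (v+1), Finite (RS p c' (μ (k : ℕ))) :=
    fun k => finite_RS p hp hc' _
  haveI : Finite (Σ k : Fin (v+1), RS p c' (μ (k : ℕ))) := by infer_instance
  calc Nat.card (RS p (c1 :: c') m)
      ≤ Nat.card (Σ k : Fin (v+1), RS p c' (μ (k : ℕ))) :=
        Nat.card_le_card_of_injective f hinj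
    _ = ∑ k : Fin (v+1), Nat.card (RS p c' (μ (k : ℕ))) := by
        haveI : ∀ k : Fin (v+1), Fintype (RS p c' (μ (k : ℕ))) :=
          fun k => Fintype.ofFinite _
        rw [Nat.card_eq_fintype_card, Fintype.card_sigma]
        exact Finset.sum_congr rfl (fun k _ => (Nat.card_eq_fintype_card).symm)
    _ = ∑ k ∈ range (v+1), Nat.card (RS p c' (μ k)) :=
        Fin.sum_univ_eq_sum_range (fun k => Nat.card (RS p c' (μ k))) (v+1)

end Decomp

section Arith

lemma sum_div_le : ∀ (V A : ℕ), (∑ k ∈ range V, A / 2 ^ (V - 1 - k)) ≤ 2 * A := by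
  intro V
  induction V with
  | zero => intro A; simp
  | succ V IH =>
    intro A
    rw [Finset.sum_range_succ]
    have hlast : A / 2 ^ (V + 1 - 1 - V) = A := by
      simp
    have hstep : ∀ k ∈ range V, A / 2 ^ (V + 1 - 1 - k) = (A / 2) / 2 ^ (V - 1 - k) := by
      intro k hk
      have hk' : k < V := mem_range.mp hk
      have he : V + 1 - 1 - k = (V - 1 - k) + 1 := by omega
      rw [he, pow_succ, mul_comm, ← Nat.div_div_eq_div_mul]
    rw [Finset.sum_congr rfl hstep, hlast]
    have h1 := IH (A / 2)
    have h2 : 2 * (A / 2) ≤ A := by omega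
    omega

lemma pow_two_arith : ∀ b : ℕ, 1 ≤ b → b * 2 ^ b + 2 ≤ 2 ^ (2 * b) := by
  intro b
  induction b with
  | zero => omega
  | succ b IH =>
    intro _
    rcases Nat.eq_zero_or_pos b with rfl | hb
    · norm_num
    have hIH := IH hb
    have e1 : (b + 1) * 2 ^ (b + 1) = 2 * (b * 2 ^ b) + 2 * 2 ^ b := by
      rw [pow_succ]; ring
    have e2 : 2 ^ (2 * (b + 1)) = 2 ^ (2 * b) * 4 := by
      rw [show 2 * (b + 1) = 2 * b + 2 by ring, pow_add]
      norm_num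
    have e3 : 2 ^ b ≤ 2 ^ (2 * b) := Nat.pow_le_pow_right (by omega) (by omega)
    omega

lemma arith_key (p : ℕ) (hp : 2 ≤ p) (b : ℕ) (hb : 1 ≤ b) :
    (Nat.log p b + 1) * 2 ^ (sd p b) + 2 ≤ 2 ^ (p * b) := by
  have hD : Nat.log p b + 1 ≤ b := by
    have := Nat.log_lt_self p (show b ≠ 0 by omega)
    omega
  have hs : sd p b ≤ b := sd_le p b
  have h1 : (Nat.log p b + 1) * 2 ^ (sd p b) ≤ b * 2 ^ b :=
    Nat.mul_le_mul hD (Nat.pow_le_pow_right (by omega) hs)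
  have h2 : b * 2 ^ b + 2 ≤ 2 ^ (2 * b) := pow_two_arith b hb
  have h3 : 2 ^ (2 * b) ≤ 2 ^ (p * b) :=
    Nat.pow_le_pow_right (by omega) (Nat.mul_le_mul_right _ hp)
  omega

end Arith

section MainProof

theorem main_key (hpp : p.Prime) :
    ∀ m, m ≠ 0 → ∀ c : List ℕ, c ≠ [] → (∀ x ∈ c, 0 < x) →
    Nat.card (RS p c m) * 2 ^ (sd p m) ≤ 2 ^ c.sum := by
  have hp : 2 ≤ p := hpp.two_le
  intro m
  induction m using Nat.strong_induction_on with | _ m IH =>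
  intro hm c hne hc
  rcases c with _ | ⟨c1, c'⟩
  · exact absurd rfl hne
  have hc1 : 0 < c1 := hc c1 (by simp)
  rcases eq_or_ne c' [] with rfl | hc'ne
  · -- singleton composition
    have hcard := card_RS_single_le p hp c1 m hc1
    rcases Nat.eq_zero_or_pos (Nat.card (RS p [c1] m)) with h0 | hpos
    · rw [h0, zero_mul]; exact Nat.zero_le _
    · have hne' : Nonempty (RS p [c1] m) := (Nat.card_pos_iff.mp hpos).1
      obtain ⟨x⟩ := hne'
      obtain ⟨t, ht⟩ := RS_single_exists p hp c1 m x
      have hsd : sd p m = sd p c1 := by rw [ht, mul_comm, sd_pow_mul p hp]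
      have hsum : ([c1] : List ℕ).sum = c1 := by simp
      rw [hsum, hsd]
      calc Nat.card (RS p [c1] m) * 2 ^ sd p c1 ≤ 1 * 2 ^ sd p c1 :=
            mul_le_mul_left hcard _
        _ = 2 ^ sd p c1 := one_mul _
        _ ≤ 2 ^ c1 := Nat.pow_le_pow_right (by omega) (sd_le p c1)
  -- main case: c = c1 :: c', c' ≠ []
  have hc'pos : ∀ x ∈ c', 0 < x := fun x hx => hc x (by simp [hx])
  set v := m.factorization p with hv
  set u := m / p ^ v with hu
  have hmu : m = p ^ v * u := (Nat.mul_div_cancel' (Nat.ordProj_dvd m p)).symm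
  have hu0 : u ≠ 0 := by
    intro h0
    rw [h0, Nat.mul_zero] at hmu
    exact hm hmu
  have hpu : ¬ p ∣ u := Nat.not_dvd_ordCompl hpp hm
  have hsdm : sd p m = sd p u := by
    conv_lhs => rw [hmu]
    exact sd_pow_mul p hp v u
  have hdec := card_RS_cons p hpp (c1 := c1) hc'pos hm
  set N : ℕ → ℕ := fun k => Nat.card (RS p c'
    (if c1 * p ^ k ≤ m ∧ p ^ (k+1) ∣ (m - c1 * p ^ k)
     then (m - c1 * p ^ k) / p ^ (k+1) else 0)) with hN
  have hdec' : Nat.card (RS p (c1 :: c') m) ≤ ∑ k ∈ range (v+1), N k := hdec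
  clear hdec
  -- structural facts for any k with N k ≠ 0
  have hstruct : ∀ k, N k ≠ 0 → ∃ X, 1 ≤ X ∧ X < m ∧ m = c1 * p ^ k + p ^ (k+1) * X ∧
      N k * 2 ^ (sd p X) ≤ 2 ^ c'.sum := by
    intro k hNk
    by_cases hcond : c1 * p ^ k ≤ m ∧ p ^ (k+1) ∣ (m - c1 * p ^ k)
    · have hNX : N k = Nat.card (RS p c' ((m - c1 * p ^ k) / p ^ (k+1))) := by
        simp only [hN]
        rw [if_pos hcond]
      set X := (m - c1 * p ^ k) / p ^ (k+1) with hX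
      have hpow : 0 < p ^ (k+1) := Nat.pow_pos (by omega)
      have hsub : p ^ (k+1) * X = m - c1 * p ^ k := Nat.mul_div_cancel' hcond.2
      have hle := hcond.1
      have hkey : m = c1 * p ^ k + p ^ (k+1) * X := by omega
      have hXpos : 1 ≤ X := by
        rw [hNX] at hNk
        obtain ⟨⟨a⟩, -⟩ := Nat.card_ne_zero.mp hNk
        exact one_le_of_RS p hp hc'pos hc'ne a
      have hXlt : X < m := by
        have h2 : 2 ≤ p ^ (k+1) := le_trans hp (Nat.le_self_pow (by omega) p)
        have h3 : 2 * X ≤ p ^ (k+1) * X := Nat.mul_le_mul_right X h2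
        have hc1p : 1 ≤ c1 * p ^ k := Nat.mul_pos hc1 (Nat.pow_pos (by omega))
        omega
      have hIHX := IH X hXlt (by omega) c' hc'ne hc'pos
      rw [hNX]
      exact ⟨X, hXpos, hXlt, hkey, hIHX⟩
    · exfalso
      have hN0 : N k = Nat.card (RS p c' 0) := by
        simp only [hN]
        rw [if_neg hcond]
      rw [hN0] at hNk
      obtain ⟨⟨a⟩, -⟩ := Nat.card_ne_zero.mp hNk
      have := one_le_of_RS p hp hc'pos hc'ne a
      omega
  by_cases hpc1 : p ∣ c1
  · -- CASE p ∣ c1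
    obtain ⟨b, hbdef⟩ := hpc1
    have hb1 : 1 ≤ b := by
      rcases Nat.eq_zero_or_pos b with rfl | hb1
      · rw [Nat.mul_zero] at hbdef; omega
      · exact hb1
    set D := Nat.log p b + 1 with hD
    have hbD : b < p ^ D := Nat.lt_pow_succ_log_self (by omega) b
    have hNv : N v = 0 := by
      by_contra hNk
      obtain ⟨X, -, -, hkey, -⟩ := hstruct v hNk
      have hdvd : p ^ (v+1) ∣ m := ⟨b + X, by rw [hkey, hbdef, pow_succ]; ring⟩
      have := (hpp.pow_dvd_iff_le_factorization hm).mp hdvd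
      omega
    have hfacts2 : ∀ k, k < v → N k ≠ 0 → ∃ X, 1 ≤ X ∧ (b + X = p ^ (v - k - 1) * u) ∧
        N k * 2 ^ (sd p X) ≤ 2 ^ c'.sum := by
      intro k hkv hNk
      obtain ⟨X, hX1, hXlt, hkey, hIHX⟩ := hstruct k hNk
      have hkey2 : m = p ^ (k+1) * (b + X) := by rw [hkey, hbdef, pow_succ]; ring
      have hdvd : p ^ (k+1) ∣ m := ⟨b + X, hkey2⟩
      have hkv' : k + 1 ≤ v := (hpp.pow_dvd_iff_le_factorization hm).mp hdvd
      have heq2 : p ^ (k+1) * (p ^ (v - k - 1) * u) = p ^ (k+1) * (b + X) := by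
        rw [← hkey2]
        conv_rhs => rw [hmu]
        rw [← mul_assoc, ← pow_add]
        congr 2
        omega
      have hBX := (Nat.eq_of_mul_eq_mul_left (Nat.pow_pos (by omega)) heq2).symm
      exact ⟨X, hX1, hBX, hIHX⟩
    have hboundA : ∀ k, k < v → N k ≠ 0 → N k * 2 ^ (sd p u) ≤ 2 ^ (sd p b) * 2 ^ c'.sum := by
      intro k hkv hNk
      obtain ⟨X, hX1, hBX, hIHX⟩ := hfacts2 k hkv hNk
      have hsdu : sd p u ≤ sd p b + sd p X := by
        have h1 : sd p u = sd p (p ^ (v - k - 1) * u) := (sd_pow_mul p hp _ _).symm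
        rw [h1, ← hBX]
        exact sd_add_le p hp b X
      calc N k * 2 ^ sd p u ≤ N k * 2 ^ (sd p b + sd p X) :=
            mul_le_mul_right (Nat.pow_le_pow_right (by omega) hsdu) _
        _ = 2 ^ sd p b * (N k * 2 ^ sd p X) := by rw [pow_add]; ring
        _ ≤ 2 ^ sd p b * 2 ^ c'.sum := mul_le_mul_right hIHX _
    have hboundB : ∀ k, k + D < v → N k * 2 ^ (sd p u) ≤ 2 ^ c'.sum / 2 ^ (v - 1 - k - D) := by
      intro k hkD
      rcases Nat.eq_zero_or_pos (N k) with h0 | hpos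
      · rw [h0, zero_mul]; exact Nat.zero_le _
      obtain ⟨X, hX1, hBX, hIHX⟩ := hfacts2 k (by omega) (by omega)
      set J := v - k - 1 with hJ
      have hJD : D ≤ J := by omega
      set i := J - D with hi
      have hppow : ∀ t : ℕ, 1 ≤ p ^ t := fun t => Nat.one_le_pow _ _ (by omega)
      have hpJu : p ^ J * u = p ^ D * (p ^ i * u) := by
        rw [← mul_assoc, ← pow_add]
        congr 2
        omega
      have hu1 : 1 ≤ u := Nat.pos_of_ne_zero hu0
      have hWpos : 1 ≤ p ^ i * u := Nat.mul_pos (hppow i) hu1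
      set W := p ^ i * u - 1 with hW
      have hWX : p ^ D * (W + 1) = p ^ D * W + p ^ D := Nat.mul_succ _ _
      have hW1 : W + 1 = p ^ i * u := by omega
      have hXeq : X = p ^ D * W + (p ^ D - b) := by
        have h1 : b + X = p ^ D * W + p ^ D := by rw [hBX, hpJu, ← hW1, hWX]
        omega
      have hsdX : sd p X = sd p W + sd p (p ^ D - b) := by
        rw [hXeq]
        exact sd_pow_mul_add p hp D W (p ^ D - b) (by omega)
      have hWdec : W = p ^ i * (u - 1) + (p ^ i - 1) := by
        have h1 : p ^ i * (u - 1 + 1) = p ^ i * (u - 1) + p ^ i := Nat.mul_succ _ _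
        have h2 : u - 1 + 1 = u := by omega
        rw [h2] at h1
        have := hppow i
        omega
      have hsdW : sd p W = sd p (u - 1) + i * (p - 1) := by
        rw [hWdec, sd_pow_mul_add p hp i (u - 1) (p ^ i - 1) (by have := hppow i; omega),
          sd_pow_sub_one p hp]
      have hsdpred : sd p (u - 1) + 1 = sd p u := sd_pred p hp hpu
      have hip : i ≤ i * (p - 1) := Nat.le_mul_of_pos_right i (by omega)
      have hsd_ge : sd p u + i ≤ sd p X := by
        have h1 : 1 ≤ sd p (p ^ D - b) := sd_pos p hp (by omega)
        omega
      have hmain : N k * 2 ^ (sd p u) * 2 ^ i ≤ 2 ^ c'.sum := by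
        calc N k * 2 ^ sd p u * 2 ^ i = N k * 2 ^ (sd p u + i) := by
              rw [pow_add, mul_assoc]
          _ ≤ N k * 2 ^ (sd p X) :=
              mul_le_mul_right (Nat.pow_le_pow_right (by omega) hsd_ge) _
          _ ≤ 2 ^ c'.sum := hIHX
      have hie : v - 1 - k - D = i := by omega
      rw [hie, Nat.le_div_iff_mul_le (Nat.pow_pos (by omega : 0 < 2))]
      exact hmain
    have hcard_filter : ((range v).filter (fun k => ¬ (k + D < v))).card ≤ D := by
      have hsub : ((range v).filter (fun k => ¬ (k + D < v))) ⊆ Finset.Ico (v - D) v := by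
        intro k hk
        simp only [mem_filter, mem_range] at hk
        simp only [Finset.mem_Ico]
        omega
      calc ((range v).filter (fun k => ¬ (k + D < v))).card
          ≤ (Finset.Ico (v - D) v).card := Finset.card_le_card hsub
        _ = v - (v - D) := Nat.card_Ico _ _
        _ ≤ D := by omega
    have hfilterP : (range v).filter (fun k => k + D < v) = range (v - D) := by
      ext k
      simp only [mem_filter, mem_range]
      omega
    have harith := arith_key p hp b hb1
    calc Nat.card (RS p (c1 :: c') m) * 2 ^ sd p m
        ≤ (∑ k ∈ range (v+1), N k) * 2 ^ sd p m := mul_le_mul_left hdec' _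
      _ = ∑ k ∈ range (v+1), N k * 2 ^ sd p u := by rw [hsdm, Finset.sum_mul]
      _ = ∑ k ∈ range v, N k * 2 ^ sd p u := by
          rw [Finset.sum_range_succ, hNv, zero_mul, add_zero]
      _ = (∑ k ∈ (range v).filter (fun k => k + D < v), N k * 2 ^ sd p u)
          + (∑ k ∈ (range v).filter (fun k => ¬ (k + D < v)), N k * 2 ^ sd p u) :=
          (Finset.sum_filter_add_sum_filter_not _ _ _).symm
      _ ≤ 2 * 2 ^ c'.sum + D * (2 ^ sd p b * 2 ^ c'.sum) := by
          apply Nat.add_le_add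
          · calc ∑ k ∈ (range v).filter (fun k => k + D < v), N k * 2 ^ sd p u
                ≤ ∑ k ∈ (range v).filter (fun k => k + D < v),
                    2 ^ c'.sum / 2 ^ (v - 1 - k - D) := by
                  apply Finset.sum_le_sum
                  intro k hk
                  simp only [mem_filter, mem_range] at hk
                  exact hboundB k hk.2
              _ = ∑ k ∈ range (v - D), 2 ^ c'.sum / 2 ^ (v - 1 - k - D) := by rw [hfilterP]
              _ = ∑ k ∈ range (v - D), 2 ^ c'.sum / 2 ^ ((v - D) - 1 - k) := by
                  apply Finset.sum_congr rfl
                  intro k hk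
                  have hk' : k < v - D := mem_range.mp hk
                  congr 2
                  omega
              _ ≤ 2 * 2 ^ c'.sum := sum_div_le _ _
          · calc ∑ k ∈ (range v).filter (fun k => ¬ (k + D < v)), N k * 2 ^ sd p u
                ≤ ((range v).filter (fun k => ¬ (k + D < v))).card •
                    (2 ^ sd p b * 2 ^ c'.sum) := by
                  apply Finset.sum_le_card_nsmul
                  intro k hk
                  simp only [mem_filter, mem_range] at hk
                  rcases Nat.eq_zero_or_pos (N k) with h0 | hpos
                  · rw [h0, zero_mul]; exact Nat.zero_le _
                  · exact hboundA k hk.1 (by omega)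
              _ = ((range v).filter (fun k => ¬ (k + D < v))).card *
                    (2 ^ sd p b * 2 ^ c'.sum) := smul_eq_mul _ _
              _ ≤ D * (2 ^ sd p b * 2 ^ c'.sum) := mul_le_mul_left hcard_filter _
      _ ≤ 2 ^ (p * b) * 2 ^ c'.sum := by
          have he : 2 * 2 ^ c'.sum + D * (2 ^ sd p b * 2 ^ c'.sum)
              = (D * 2 ^ sd p b + 2) * 2 ^ c'.sum := by ring
          rw [he]
          exact mul_le_mul_left harith _
      _ = 2 ^ (c1 :: c').sum := by
          rw [List.sum_cons, ← pow_add, hbdef]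
  · -- CASE ¬ p ∣ c1
    have hzero : ∀ k, k < v → N k = 0 := by
      intro k hk
      by_contra hNk
      obtain ⟨X, hX1, -, hkey, -⟩ := hstruct k hNk
      have hdvdm : p ^ (k+1) ∣ m := (hpp.pow_dvd_iff_le_factorization hm).mpr (by omega)
      have hdvd1 : p ^ (k+1) ∣ c1 * p ^ k := by
        have he : c1 * p ^ k = m - p ^ (k+1) * X := by omega
        rw [he]
        exact Nat.dvd_sub hdvdm (Dvd.intro _ rfl)
      have hpc : p ∣ c1 := by
        have h1 : p ^ k * p ∣ p ^ k * c1 := by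
          rw [← pow_succ]
          rw [mul_comm (p ^ k) c1]
          exact hdvd1
        exact (mul_dvd_mul_iff_left (show (p:ℕ) ^ k ≠ 0 by positivity)).mp h1
      exact hpc1 hpc
    have hsum_eq : ∑ k ∈ range (v+1), N k = N v := by
      rw [Finset.sum_range_succ, Finset.sum_eq_zero (fun k hk => hzero k (mem_range.mp hk)),
        zero_add]
    rcases Nat.eq_zero_or_pos (N v) with h0 | hpos
    · calc Nat.card (RS p (c1 :: c') m) * 2 ^ sd p m
          ≤ (∑ k ∈ range (v+1), N k) * 2 ^ sd p m := mul_le_mul_left hdec' _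
        _ = 0 := by rw [hsum_eq, h0, zero_mul]
        _ ≤ 2 ^ (c1 :: c').sum := Nat.zero_le _
    obtain ⟨X, hX1, hXlt, hkey, hIHX⟩ := hstruct v (by omega)
    have huX : u = c1 + p * X := by
      have he : p ^ v * u = p ^ v * (c1 + p * X) := by
        rw [← hmu, hkey, pow_succ]
        ring
      exact Nat.eq_of_mul_eq_mul_left (Nat.pow_pos (by omega)) he
    have hsd2 : sd p u ≤ sd p c1 + sd p X := by
      rw [huX]
      calc sd p (c1 + p * X) ≤ sd p c1 + sd p (p * X) := sd_add_le p hp _ _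
        _ = sd p c1 + sd p X := by rw [sd_p_mul p hp]
    calc Nat.card (RS p (c1 :: c') m) * 2 ^ sd p m
        ≤ (∑ k ∈ range (v+1), N k) * 2 ^ sd p m := mul_le_mul_left hdec' _
      _ = N v * 2 ^ sd p u := by rw [hsum_eq, hsdm]
      _ ≤ N v * 2 ^ (sd p c1 + sd p X) :=
          mul_le_mul_right (Nat.pow_le_pow_right (by omega) hsd2) _
      _ = 2 ^ sd p c1 * (N v * 2 ^ sd p X) := by rw [pow_add]; ring
      _ ≤ 2 ^ sd p c1 * 2 ^ c'.sum := mul_le_mul_right hIHX _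
      _ ≤ 2 ^ c1 * 2 ^ c'.sum :=
          mul_le_mul_left (Nat.pow_le_pow_right (by omega) (sd_le p c1)) _
      _ = 2 ^ (c1 :: c').sum := by rw [List.sum_cons, ← pow_add]

end MainProof

/-- for a prime `p`, a composition `c = (c_1, …, c_r)` of `n ≥ 1`
and a positive integer `m`, the number of strictly increasing tuples
`(s_1, …, s_r)` of nonnegative integers with `m = Σ c_i p^{s_i}` is at most `2^n`. -/
theorem stmt11 (p : ℕ) (hp : p.Prime) (n : ℕ) (hn : 1 ≤ n)
    (c : List ℕ) (hc : ∀ x ∈ c, 0 < x) (hsum : c.sum = n) (m : ℕ) (hm : 1 ≤ m) :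
    Nat.card {s : Fin c.length → ℕ // StrictMono s ∧
        m = ∑ i : Fin c.length, c.get i * p ^ (s i)} ≤ 2 ^ n := by
  have hne : c ≠ [] := by
    rintro rfl
    simp at hsum
    omega
  have hkey := main_key p hp m (by omega) c hne hc
  have hsd1 : 1 ≤ sd p m := sd_pos p hp.two_le (by omega)
  have h2 : 2 ≤ 2 ^ sd p m := by
    calc (2:ℕ) = 2 ^ 1 := rfl
      _ ≤ 2 ^ sd p m := Nat.pow_le_pow_right (by omega) hsd1
  have hfin : Nat.card (RS p c m) ≤ 2 ^ c.sum := by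
    have hle := Nat.le_mul_of_pos_right (Nat.card (RS p c m))
      (show 0 < 2 ^ sd p m by omega)
    omega
  rw [hsum] at hfin
  exact hfin
end

section
/- Let p be a prime and n ≥ 1 an integer. Then for every positive integer m, the number p_{A,n}(m) of partitions of m into exactly n parts each of which is a power of p satisfies p_{A,n}(m) < e^{2πn/√3} · 2^n. -/
open Multiset


variable {p : ℕ}

lemma sumdig_div (hp : 2 ≤ p) {x : ℕ} (hx : x ≠ 0) (h : p ∣ x) :
    (Nat.digits p (x / p)).sum = (Nat.digits p x).sum := by
  rw [Nat.digits_def' hp (Nat.pos_of_ne_zero hx), List.sum_cons,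
    Nat.mod_eq_zero_of_dvd h, zero_add]

lemma sumdig_pred (hp : p.Prime) : ∀ x : ℕ, x ≠ 0 →
    (Nat.digits p (x - 1)).sum + 1 = (Nat.digits p x).sum + (p - 1) * x.factorization p := by
  have hp2 : 2 ≤ p := hp.two_le
  intro x
  induction x using Nat.strong_induction_on with
  | _ x ih =>
    intro hx
    by_cases hdvd : p ∣ x
    · obtain ⟨y, rfl⟩ := hdvd
      have hy : y ≠ 0 := by rintro rfl; simp at hx
      obtain ⟨k, rfl⟩ : ∃ k, y = k + 1 := ⟨y - 1, by omega⟩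
      have hmul : p * (k + 1) = p * k + p := Nat.mul_succ p k
      have h1 : p * (k + 1) - 1 = p * k + (p - 1) := by omega
      have hmod : (p * (k + 1) - 1) % p = p - 1 := by
        rw [h1, Nat.mul_add_mod, Nat.mod_eq_of_lt (by omega)]
      have hdiv : (p * (k + 1) - 1) / p = k := by
        have h0 : (p - 1) / p = 0 := Nat.div_eq_of_lt (by omega)
        rw [h1, Nat.mul_add_div (by omega), h0, Nat.add_zero]
      have hfact : (p * (k + 1)).factorization p = (k + 1).factorization p + 1 := by
        rw [Nat.factorization_mul (by omega) (by omega)]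
        simp [hp.factorization, Finsupp.single_apply]
        ring
      have hsum : (Nat.digits p (p * (k + 1))).sum = (Nat.digits p (k + 1)).sum := by
        rw [← sumdig_div hp2 hx ⟨k + 1, rfl⟩, Nat.mul_div_cancel_left _ (by omega)]
      have hih := ih (k + 1) (by nlinarith) (by omega)
      simp only [Nat.add_sub_cancel] at hih
      by_cases hk1 : p * (k + 1) - 1 = 0
      · omega
      rw [Nat.digits_def' hp2 (Nat.pos_of_ne_zero hk1), List.sum_cons, hmod, hdiv,
        hsum, hfact]
      have hexp : (p - 1) * ((k + 1).factorization p + 1)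
          = (p - 1) * ((k + 1).factorization p) + (p - 1) := by ring
      omega
    · have hfact : x.factorization p = 0 := Nat.factorization_eq_zero_of_not_dvd hdvd
      rw [hfact, Nat.mul_zero, Nat.add_zero]
      have hx0 : 0 < x := Nat.pos_of_ne_zero hx
      have hdm := Nat.div_add_mod x p
      have hplt : x % p < p := Nat.mod_lt x (by omega)
      have hr : x % p ≠ 0 := fun h => hdvd (Nat.dvd_of_mod_eq_zero h)
      by_cases hx1 : x = 1
      · subst hx1
        have hd1 : Nat.digits p 1 = [1] := by
          rw [Nat.digits_def' hp2 Nat.one_pos, Nat.mod_eq_of_lt (by omega),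
            Nat.div_eq_of_lt (by omega)]
          simp
        simp [hd1]
      have hx1' : x - 1 ≠ 0 := by omega
      have h1 : x - 1 = p * (x / p) + (x % p - 1) := by omega
      have hmod : (x - 1) % p = x % p - 1 := by
        rw [h1, Nat.mul_add_mod, Nat.mod_eq_of_lt (by omega)]
      have hdiv : (x - 1) / p = x / p := by
        have h0 : (x % p - 1) / p = 0 := Nat.div_eq_of_lt (by omega)
        rw [h1, Nat.mul_add_div (by omega), h0, Nat.add_zero]
      rw [Nat.digits_def' hp2 (Nat.pos_of_ne_zero hx1'), Nat.digits_def' hp2 hx0,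
        List.sum_cons, List.sum_cons, hmod, hdiv]
      omega

variable {p : ℕ}


lemma sumdig_pow_div (hp : p.Prime) {m : ℕ} (hm : m ≠ 0) :
    ∀ e, e ≤ m.factorization p → (Nat.digits p (m / p ^ e)).sum = (Nat.digits p m).sum := by
  intro e
  induction e with
  | zero => simp
  | succ e ih =>
    intro he
    have hdvd : p ^ (e + 1) ∣ m :=
      (Nat.Prime.pow_dvd_iff_le_factorization hp hm).mpr he
    have hdvd' : p ^ e ∣ m := dvd_trans (pow_dvd_pow p (by omega)) hdvd
    have hq : m / p ^ e ≠ 0 := by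
      have := Nat.le_of_dvd (Nat.pos_of_ne_zero hm) hdvd'
      have := Nat.one_le_div_iff (pow_pos hp.pos e) |>.mpr this
      omega
    have hpd : p ∣ m / p ^ e := by
      rw [Nat.dvd_div_iff_mul_dvd hdvd', ← pow_succ]
      exact hdvd
    have h1 : m / p ^ (e + 1) = (m / p ^ e) / p := by
      rw [Nat.div_div_eq_div_mul, ← pow_succ]
    rw [h1, sumdig_div hp.two_le hq hpd, ih (by omega)]

lemma sumdig_pos (hp : p.Prime) {m : ℕ} (hm : m ≠ 0) : 1 ≤ (Nat.digits p m).sum := by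
  by_contra h
  push_neg at h
  interval_cases hs : (Nat.digits p m).sum
  have hall := List.sum_eq_zero_iff.mp hs
  have hne : Nat.digits p m ≠ [] := Nat.digits_ne_nil_iff_ne_zero.mpr hm
  exact Nat.getLast_digit_ne_zero p hm (hall _ (List.getLast_mem hne))

private lemma geo_half_le_two (v : ℕ) :
    ∑ e : Fin (v + 1), (1 / 2 : ℝ) ^ (v - (e : ℕ)) ≤ 2 := by
  rw [Fin.sum_univ_eq_sum_range (fun e => (1 / 2 : ℝ) ^ (v - e)) (v + 1)]
  have h := Finset.sum_range_reflect (fun j => (1 / 2 : ℝ) ^ j) (v + 1)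
  simp only [Nat.add_sub_cancel] at h
  calc ∑ e ∈ Finset.range (v + 1), (1 / 2 : ℝ) ^ (v - e)
      = ∑ j ∈ Finset.range (v + 1), (1 / 2 : ℝ) ^ j := h
    _ ≤ 2 := sum_geometric_two_le _

noncomputable def Npn (p n m : ℕ) : ℕ :=
  Nat.card {P : Nat.Partition m // Multiset.card P.parts = n ∧ ∀ x ∈ P.parts, ∃ k : ℕ, x = p ^ k}

lemma Npn_zero (p n : ℕ) : Npn p n 0 ≤ 1 := by
  have h1 : Nat.card (Nat.Partition 0) = 1 := by
    rw [Nat.card_eq_fintype_card]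
    exact Fintype.card_eq_one_iff.mpr ⟨default, fun P => Subsingleton.elim _ _⟩
  calc Npn p n 0 ≤ Nat.card (Nat.Partition 0) :=
        Nat.card_le_card_of_injective Subtype.val Subtype.val_injective
    _ = 1 := h1

lemma Npn_pos_zero (p m : ℕ) (hm : 1 ≤ m) : Npn p 0 m = 0 := by
  have : IsEmpty {P : Nat.Partition m //
      Multiset.card P.parts = 0 ∧ ∀ x ∈ P.parts, ∃ k : ℕ, x = p ^ k} := by
    constructor
    rintro ⟨P, h0, -⟩
    rw [Multiset.card_eq_zero] at h0
    have := P.parts_sum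
    rw [h0] at this
    simp at this
    omega
  exact Nat.card_of_isEmpty


lemma card_step_s12 {p : ℕ} (hp : p.Prime) {n m : ℕ} (hn : 1 ≤ n) (hm : 1 ≤ m) :
    Npn p n m ≤ ∑ e : Fin (m.factorization p + 1), Npn p (n - 1) (m / p ^ (e : ℕ) - 1) := by
  classical
  have hp1 : 1 < p := hp.one_lt
  set v := m.factorization p with hv
  let S : Fin (v + 1) → Type := fun e =>
    {Q : Nat.Partition (m / p ^ (e : ℕ) - 1) //
      Multiset.card Q.parts = n - 1 ∧ ∀ x ∈ Q.parts, ∃ k : ℕ, x = p ^ k}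
  letI : ∀ e, Fintype (S e) := fun e => Fintype.ofFinite _
  have hdvd : ∀ e : Fin (v + 1), p ^ (e : ℕ) ∣ m := fun e =>
    (Nat.Prime.pow_dvd_iff_le_factorization hp (by omega)).mpr (by omega)
  have hqpos : ∀ e : Fin (v + 1), 1 ≤ m / p ^ (e : ℕ) := fun e =>
    Nat.one_le_div_iff (pow_pos (by omega) _) |>.mpr
      (Nat.le_of_dvd (by omega) (hdvd e))
  let G : (Σ e : Fin (v + 1), S e) → {P : Nat.Partition m //
      Multiset.card P.parts = n ∧ ∀ x ∈ P.parts, ∃ k : ℕ, x = p ^ k} := fun x =>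
    ⟨⟨(p ^ (x.1 : ℕ)) ::ₘ x.2.1.parts.map (· * p ^ (x.1 : ℕ)),
      by
        intro i hi
        rcases Multiset.mem_cons.mp hi with h | h
        · subst h; exact pow_pos (by omega) _
        · obtain ⟨y, hy, rfl⟩ := Multiset.mem_map.mp h
          exact Nat.mul_pos (x.2.1.parts_pos hy) (pow_pos (by omega) _),
      by
        rw [Multiset.sum_cons, Multiset.sum_map_mul_right]
        simp only [Multiset.map_id']
        rw [x.2.1.parts_sum]
        have hA : (m / p ^ (x.1 : ℕ)) * p ^ (x.1 : ℕ) = m := Nat.div_mul_cancel (hdvd x.1)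
        have hB : (m / p ^ (x.1 : ℕ) - 1) * p ^ (x.1 : ℕ)
            = (m / p ^ (x.1 : ℕ)) * p ^ (x.1 : ℕ) - p ^ (x.1 : ℕ) := by
          rw [Nat.sub_mul, Nat.one_mul]
        have := hqpos x.1
        have hC : p ^ (x.1 : ℕ) ≤ (m / p ^ (x.1 : ℕ)) * p ^ (x.1 : ℕ) :=
          Nat.le_mul_of_pos_left _ (by omega)
        omega⟩,
      by
        simp only [Multiset.card_cons, Multiset.card_map]
        rw [x.2.2.1]; omega,
      by
        intro y hy
        rcases Multiset.mem_cons.mp hy with h | h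
        · exact ⟨(x.1 : ℕ), h⟩
        · obtain ⟨z, hz, rfl⟩ := Multiset.mem_map.mp h
          obtain ⟨k, rfl⟩ := x.2.2.2 z hz
          exact ⟨k + (x.1 : ℕ), by rw [pow_add]⟩⟩
  have hGsurj : Function.Surjective G := by
    rintro ⟨P, hcard, hpow⟩
    have hne : P.parts ≠ 0 := by
      intro h0; rw [h0] at hcard; simp at hcard; omega
    have hfne : P.parts.toFinset.Nonempty := by rwa [Multiset.toFinset_nonempty]
    set a := P.parts.toFinset.min' hfne with hadef
    have ha : a ∈ P.parts := Multiset.mem_toFinset.mp (P.parts.toFinset.min'_mem hfne)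
    have hamin : ∀ x ∈ P.parts, a ≤ x := fun x hx =>
      P.parts.toFinset.min'_le x (Multiset.mem_toFinset.mpr hx)
    set e := a.factorization p with hedef
    have hae : a = p ^ e := by
      obtain ⟨k, hk⟩ := hpow a ha
      rw [hk, hedef, hk, hp.factorization_pow]
      simp
    have hdvd_all : ∀ x ∈ P.parts, p ^ e ∣ x := by
      intro x hx
      obtain ⟨k, hk⟩ := hpow x hx
      have : e ≤ k := by
        rw [← Nat.pow_le_pow_iff_right hp1, ← hae, ← hk]
        exact hamin x hx
      exact hk ▸ pow_dvd_pow p this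
    have hdvd_m : p ^ e ∣ m := P.parts_sum ▸ Multiset.dvd_sum hdvd_all
    have he_le : e ≤ v := by
      rw [hv]
      exact (Nat.Prime.pow_dvd_iff_le_factorization hp (by omega)).mp hdvd_m
    have hppos : 0 < p ^ e := pow_pos (by omega) e
    have hmapsum : ((P.parts.map (· / p ^ e)).sum) = m / p ^ e := by
      have h1 : (P.parts.map (· / p ^ e)).sum * p ^ e = m := by
        rw [← Multiset.sum_map_mul_right]
        rw [Multiset.map_congr rfl (fun x hx => Nat.div_mul_cancel (hdvd_all x hx))]
        simp [P.parts_sum]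
      exact (Nat.div_eq_of_eq_mul_left hppos h1.symm).symm
    have h1mem : 1 ∈ P.parts.map (· / p ^ e) := by
      refine Multiset.mem_map.mpr ⟨a, ha, ?_⟩
      rw [hae, Nat.div_self hppos]
    set ν := (P.parts.map (· / p ^ e)).erase 1 with hνdef
    have hcons : (1 : ℕ) ::ₘ ν = P.parts.map (· / p ^ e) := Multiset.cons_erase h1mem
    have hQsum : ν.sum = m / p ^ e - 1 := by
      have := congrArg Multiset.sum hcons
      rw [Multiset.sum_cons, hmapsum] at this
      omega
    have hνpos : ∀ {y : ℕ}, y ∈ ν → 0 < y := by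
      intro y hy
      have hy' : y ∈ P.parts.map (· / p ^ e) := Multiset.mem_of_mem_erase hy
      obtain ⟨x, hx, rfl⟩ := Multiset.mem_map.mp hy'
      exact Nat.div_pos (Nat.le_of_dvd (P.parts_pos hx) (hdvd_all x hx)) hppos
    have hνcard : Multiset.card ν = n - 1 := by
      have h2 := Multiset.card_erase_of_mem h1mem
      rw [Multiset.card_map, hcard] at h2
      rw [hνdef, h2]
      rfl
    have hνpow : ∀ y ∈ ν, ∃ k : ℕ, y = p ^ k := by
      intro y hy
      have hy' : y ∈ P.parts.map (· / p ^ e) := Multiset.mem_of_mem_erase hy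
      obtain ⟨x, hx, rfl⟩ := Multiset.mem_map.mp hy'
      obtain ⟨k, hk⟩ := hpow x hx
      have hek : e ≤ k := by
        rw [← Nat.pow_le_pow_iff_right hp1, ← hae, ← hk]
        exact hamin x hx
      exact ⟨k - e, by rw [hk, Nat.pow_div hek (by omega)]⟩
    refine ⟨⟨⟨e, by omega⟩, ⟨⟨ν, hνpos, hQsum⟩, hνcard, hνpow⟩⟩, ?_⟩
    apply Subtype.ext
    apply Nat.Partition.ext
    show (p ^ e) ::ₘ ν.map (· * p ^ e) = P.parts
    have : ((1 : ℕ) ::ₘ ν).map (· * p ^ e) = (P.parts.map (· / p ^ e)).map (· * p ^ e) := by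
      rw [hcons]
    rw [Multiset.map_cons, one_mul] at this
    rw [this, Multiset.map_map]
    calc Multiset.map ((fun x => x * p ^ e) ∘ fun x => x / p ^ e) P.parts
        = Multiset.map id P.parts :=
          Multiset.map_congr rfl (fun x hx => Nat.div_mul_cancel (hdvd_all x hx))
      _ = P.parts := Multiset.map_id _
  calc Npn p n m ≤ Nat.card (Σ e : Fin (v + 1), S e) :=
        Nat.card_le_card_of_surjective G hGsurj
    _ = ∑ e : Fin (v + 1), Npn p (n - 1) (m / p ^ (e : ℕ) - 1) := by
        rw [Nat.card_eq_fintype_card, Fintype.card_sigma]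
        apply Finset.sum_congr rfl
        intro e _
        rw [← Nat.card_eq_fintype_card]
        rfl

lemma main_bound {p : ℕ} (hp : p.Prime) :
    ∀ n m : ℕ, (Npn p n m : ℝ) ≤ 4 ^ n * (1 / 2 : ℝ) ^ ((Nat.digits p m).sum) := by
  intro n
  induction n with
  | zero =>
    intro m
    rcases Nat.eq_zero_or_pos m with rfl | hm
    · simp only [pow_zero, one_mul, Nat.digits_zero, List.sum_nil]
      exact_mod_cast Npn_zero p 0
    · rw [Npn_pos_zero p m hm]
      simp only [Nat.cast_zero]
      positivity
  | succ n ih =>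
    intro m
    rcases Nat.eq_zero_or_pos m with rfl | hm
    · simp only [Nat.digits_zero, List.sum_nil, pow_zero, mul_one]
      calc (Npn p (n + 1) 0 : ℝ) ≤ 1 := by exact_mod_cast Npn_zero p (n + 1)
        _ ≤ 4 ^ (n + 1) := one_le_pow₀ (by norm_num : (1:ℝ) ≤ 4)
    · set v := m.factorization p with hv
      set s := (Nat.digits p m).sum with hs
      have hs1 : 1 ≤ s := sumdig_pos hp (by omega)
      obtain ⟨t, ht⟩ : ∃ t, s = t + 1 := ⟨s - 1, by omega⟩
      have hstep := card_step_s12 hp (show 1 ≤ n + 1 by omega) hm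
      have hse : ∀ e : Fin (v + 1),
          (Nat.digits p (m / p ^ (e : ℕ) - 1)).sum = t + (p - 1) * (v - (e : ℕ)) := by
        intro e
        have hdvd : p ^ (e : ℕ) ∣ m :=
          (Nat.Prime.pow_dvd_iff_le_factorization hp (by omega)).mpr (by omega)
        have hx : m / p ^ (e : ℕ) ≠ 0 := by
          have h1 := Nat.le_of_dvd (by omega) hdvd
          have := Nat.one_le_div_iff (pow_pos hp.pos (e : ℕ)) |>.mpr h1
          omega
        have hxf : (m / p ^ (e : ℕ)).factorization p = v - (e : ℕ) := by
          rw [Nat.factorization_div hdvd]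
          simp [hp.factorization_pow, hv]
        have h2 := sumdig_pred hp (m / p ^ (e : ℕ)) hx
        rw [hxf, sumdig_pow_div hp (by omega) (e : ℕ) (by omega), ← hs] at h2
        omega
      calc (Npn p (n + 1) m : ℝ)
          ≤ ((∑ e : Fin (v + 1), Npn p n (m / p ^ (e : ℕ) - 1) : ℕ) : ℝ) := by
            exact_mod_cast hstep
        _ = ∑ e : Fin (v + 1), (Npn p n (m / p ^ (e : ℕ) - 1) : ℝ) := by push_cast; rfl
        _ ≤ ∑ e : Fin (v + 1), 4 ^ n * (1 / 2 : ℝ) ^ (t + (p - 1) * (v - (e : ℕ))) := by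
            apply Finset.sum_le_sum
            intro e _
            have := ih (m / p ^ (e : ℕ) - 1)
            rwa [hse e] at this
        _ ≤ ∑ e : Fin (v + 1), 4 ^ n * ((1 / 2 : ℝ) ^ t * (1 / 2 : ℝ) ^ (v - (e : ℕ))) := by
            apply Finset.sum_le_sum
            intro e _
            rw [pow_add]
            apply mul_le_mul_of_nonneg_left _ (by positivity)
            apply mul_le_mul_of_nonneg_left _ (by positivity)
            apply pow_le_pow_of_le_one (by norm_num) (by norm_num)
            have : 1 ≤ p - 1 := by have := hp.two_le; omega
            calc v - (e : ℕ) = 1 * (v - (e : ℕ)) := (one_mul _).symm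
              _ ≤ (p - 1) * (v - (e : ℕ)) := Nat.mul_le_mul_right _ this
        _ = 4 ^ n * (1 / 2 : ℝ) ^ t * ∑ e : Fin (v + 1), (1 / 2 : ℝ) ^ (v - (e : ℕ)) := by
            rw [Finset.mul_sum]
            apply Finset.sum_congr rfl
            intro e _
            ring
        _ ≤ 4 ^ n * (1 / 2 : ℝ) ^ t * 2 := by
            apply mul_le_mul_of_nonneg_left (geo_half_le_two v) (by positivity)
        _ = 4 ^ (n + 1) * (1 / 2 : ℝ) ^ s := by
            rw [ht]
            ring


/-- for a prime `p` and `n ≥ 1`, the number of partitions of `m ≥ 1` into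
exactly `n` parts each of which is a power of `p` is `< e^{2πn/√3} · 2^n`. -/
theorem stmt12 (p : ℕ) (hp : p.Prime) (n : ℕ) (hn : 1 ≤ n) (m : ℕ) (hm : 1 ≤ m) :
    (Nat.card {P : Nat.Partition m //
        Multiset.card P.parts = n ∧ ∀ x ∈ P.parts, ∃ k : ℕ, x = p ^ k} : ℝ) <
      Real.exp (2 * Real.pi * n / Real.sqrt 3) * 2 ^ n := by
  have h1 : (Nat.card {P : Nat.Partition m //
      Multiset.card P.parts = n ∧ ∀ x ∈ P.parts, ∃ k : ℕ, x = p ^ k} : ℝ) = (Npn p n m : ℝ) := rfl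
  rw [h1]
  have h2 := main_bound hp n m
  have hs1 : 1 ≤ (Nat.digits p m).sum := sumdig_pos hp (by omega)
  have h3 : ((1 : ℝ) / 2) ^ ((Nat.digits p m).sum) ≤ (1 / 2 : ℝ) ^ 1 :=
    pow_le_pow_of_le_one (by norm_num) (by norm_num) hs1
  have h4 : (Npn p n m : ℝ) ≤ 4 ^ n * (1 / 2) := by
    calc (Npn p n m : ℝ) ≤ 4 ^ n * (1 / 2 : ℝ) ^ ((Nat.digits p m).sum) := h2
      _ ≤ 4 ^ n * (1 / 2 : ℝ) ^ 1 := by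
          apply mul_le_mul_of_nonneg_left h3 (by positivity)
      _ = 4 ^ n * (1 / 2) := by norm_num
  -- now strict inequality with the exponential
  have hsqrt3_pos : (0 : ℝ) < Real.sqrt 3 := Real.sqrt_pos.mpr (by norm_num)
  have hsqrt3_le : Real.sqrt 3 ≤ 2 := by
    rw [show (2 : ℝ) = Real.sqrt 4 by
      rw [show (4 : ℝ) = 2 ^ 2 by norm_num, Real.sqrt_sq (by norm_num : (0:ℝ) ≤ 2)]]
    exact Real.sqrt_le_sqrt (by norm_num)
  have hpi : (3 : ℝ) ≤ Real.pi := Real.pi_gt_three.le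
  have hexp_arg : (1 : ℝ) ≤ 2 * Real.pi / Real.sqrt 3 := by
    rw [le_div_iff₀ hsqrt3_pos]
    nlinarith
  have hlog2 : Real.log 2 ≤ 1 := by
    have := Real.log_two_lt_d9
    linarith
  have h5 : (2 : ℝ) ^ n ≤ Real.exp (2 * Real.pi * n / Real.sqrt 3) := by
    have h6 : (2 : ℝ) ^ n = Real.exp (n * Real.log 2) := by
      rw [Real.exp_nat_mul, Real.exp_log (by norm_num : (0:ℝ) < 2)]
    rw [h6]
    apply Real.exp_le_exp.mpr
    have hn0 : (0 : ℝ) ≤ (n : ℝ) := Nat.cast_nonneg n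
    calc (n : ℝ) * Real.log 2 ≤ (n : ℝ) * 1 := mul_le_mul_of_nonneg_left hlog2 hn0
      _ = (n : ℝ) := mul_one _
      _ ≤ (n : ℝ) * (2 * Real.pi / Real.sqrt 3) := le_mul_of_one_le_right hn0 hexp_arg
      _ = 2 * Real.pi * n / Real.sqrt 3 := by ring
  have h2npos : (0 : ℝ) < 2 ^ n := by positivity
  calc (Npn p n m : ℝ) ≤ 4 ^ n * (1 / 2) := h4
    _ = 2 ^ n * (2 ^ n * (1 / 2)) := by
        rw [show (4 : ℝ) = 2 * 2 by norm_num, mul_pow]; ring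
    _ < 2 ^ n * Real.exp (2 * Real.pi * n / Real.sqrt 3) := by
        apply mul_lt_mul_of_pos_left _ h2npos
        calc (2 : ℝ) ^ n * (1 / 2) < 2 ^ n := by nlinarith
          _ ≤ Real.exp (2 * Real.pi * n / Real.sqrt 3) := h5
    _ = Real.exp (2 * Real.pi * n / Real.sqrt 3) * 2 ^ n := mul_comm _ _
end
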